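/- arXiv:1611.04050 — 3 statements merged into one kernel-verified Lean document; each statement's English description precedes it below -/
import Mathlib

section
/- Let x be an element of the tensor space S·Y with coefficient matrix X ∈ ℝ^{q×s}, let M_Y = L_Y L_Yᵀ and M_S = L_S L_Sᵀ with L_Y, L_S invertible, let V ∈ ℝ^{q×q̂} satisfy VᵀV = I_{q̂}, and let Ŷ := span{ν̂_1,…,ν̂_{q̂}} where ν̂_k := Σ_{i=1}^{q} (L_Y^{-ᵀ} V)_{ik} ν_i. Then the L²((0,T)×Ω)-orthogonal projection Π_{S·Ŷ} x of x onto the tensor space S·Ŷ has coefficient matrix X̂ = L_Y^{-ᵀ} V Vᵀ L_Yᵀ X (with respect to the bases ν and ψ), and the projection error satisfies ‖x − Π_{S·Ŷ} x‖_{L²((0,T)×Ω)} = ‖(I_q − V Vᵀ) L_Yᵀ X L_S‖_F. -/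
open MeasureTheory Matrix
open scoped BigOperators

lemma sum_entries' {m n : ℕ} (C D : Matrix (Fin m) (Fin n) ℝ) :
    ∑ i, ∑ j, C i j * D i j = Matrix.trace (Cᵀ * D) := by
  simp only [Matrix.trace, Matrix.diag, Matrix.mul_apply, Matrix.transpose_apply]
  exact Finset.sum_comm

lemma quad' {q s : ℕ} (LY : Matrix (Fin q) (Fin q) ℝ) (LS : Matrix (Fin s) (Fin s) ℝ)
    (A B : Matrix (Fin q) (Fin s) ℝ) :
    ∑ i, ∑ j, ∑ k, ∑ l, A i j * B k l * ((LY * LYᵀ) i k) * ((LS * LSᵀ) j l)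
      = ∑ i, ∑ j, (LYᵀ * A * LS) i j * (LYᵀ * B * LS) i j := by
  have h1 : ∀ (MY : Matrix (Fin q) (Fin q) ℝ) (MS : Matrix (Fin s) (Fin s) ℝ) (i : Fin q) (j : Fin s),
      (∑ k, ∑ l, A i j * B k l * MY i k * MS j l) = A i j * (MY * B * MSᵀ) i j := by
    intro MY MS i j
    rw [Finset.sum_comm, Matrix.mul_apply, Finset.mul_sum]
    refine Finset.sum_congr rfl fun l _ => ?_
    simp only [Matrix.mul_apply, Matrix.transpose_apply]
    rw [Finset.sum_mul, Finset.mul_sum]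
    exact Finset.sum_congr rfl fun k _ => by ring
  calc ∑ i, ∑ j, ∑ k, ∑ l, A i j * B k l * ((LY * LYᵀ) i k) * ((LS * LSᵀ) j l)
      = ∑ i, ∑ j, A i j * ((LY*LYᵀ) * B * (LS*LSᵀ)ᵀ) i j := by
        exact Finset.sum_congr rfl fun i _ => Finset.sum_congr rfl fun j _ => h1 _ _ i j
    _ = Matrix.trace (Aᵀ * ((LY*LYᵀ) * B * (LS*LSᵀ)ᵀ)) := sum_entries' _ _
    _ = Matrix.trace ((LYᵀ * A * LS)ᵀ * (LYᵀ * B * LS)) := by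
        simp only [Matrix.transpose_mul, Matrix.transpose_transpose, Matrix.mul_assoc]
        rw [Matrix.trace_mul_comm LSᵀ (Aᵀ * (LY * (LYᵀ * (B * LS))))]
        simp only [Matrix.mul_assoc]
    _ = ∑ i, ∑ j, (LYᵀ * A * LS) i j * (LYᵀ * B * LS) i j := (sum_entries' _ _).symm

lemma key' {α β : Type*} [MeasurableSpace α] [MeasurableSpace β]
    (μ : Measure α) (τ : Measure β) [SigmaFinite μ] [SigmaFinite τ]
    {q s : ℕ} (ν : Fin q → Lp ℝ 2 μ) (ψ : Fin s → Lp ℝ 2 τ)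
    (A B : Matrix (Fin q) (Fin s) ℝ) :
    ∫ p : α × β, (∑ j, ∑ i, A i j * ν i p.1 * ψ j p.2) * (∑ j, ∑ k, B k j * ν k p.1 * ψ j p.2) ∂(μ.prod τ)
      = ∑ i, ∑ j, ∑ k, ∑ l, A i j * B k l * (inner ℝ (ν i) (ν k) : ℝ) * (inner ℝ (ψ j) (ψ l) : ℝ) := by
  have hinnν : ∀ i k : Fin q, ∫ a, (ν i : α → ℝ) a * (ν k : α → ℝ) a ∂μ = (inner ℝ (ν i) (ν k) : ℝ) := by
    intro i k
    rw [L2.inner_def]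
    simp [RCLike.inner_apply, mul_comm]
  have hinnψ : ∀ j l : Fin s, ∫ b, (ψ j : β → ℝ) b * (ψ l : β → ℝ) b ∂τ = (inner ℝ (ψ j) (ψ l) : ℝ) := by
    intro j l
    rw [L2.inner_def]
    simp [RCLike.inner_apply, mul_comm]
  have hIν : ∀ i k : Fin q, Integrable (fun a => (ν i : α → ℝ) a * (ν k : α → ℝ) a) μ := by
    intro i k
    simpa [RCLike.inner_apply] using L2.integrable_inner (𝕜 := ℝ) (ν k) (ν i)
  have hIψ : ∀ j l : Fin s, Integrable (fun b => (ψ j : β → ℝ) b * (ψ l : β → ℝ) b) τ := by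
    intro j l
    simpa [RCLike.inner_apply] using L2.integrable_inner (𝕜 := ℝ) (ψ l) (ψ j)
  have hfun : ∀ p : α × β,
      (∑ j, ∑ i, A i j * (ν i : α → ℝ) p.1 * (ψ j : β → ℝ) p.2)
        * (∑ j, ∑ k, B k j * (ν k : α → ℝ) p.1 * (ψ j : β → ℝ) p.2)
      = ∑ x : (Fin q × Fin s) × (Fin q × Fin s),
          (A x.1.1 x.1.2 * B x.2.1 x.2.2)
            * ((fun a => (ν x.1.1 : α → ℝ) a * (ν x.2.1 : α → ℝ) a) p.1
              * (fun b => (ψ x.1.2 : β → ℝ) b * (ψ x.2.2 : β → ℝ) b) p.2) := by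
    intro p
    have e1 : ∀ (M : Matrix (Fin q) (Fin s) ℝ),
        (∑ j, ∑ i, M i j * (ν i : α → ℝ) p.1 * (ψ j : β → ℝ) p.2)
          = ∑ x : Fin q × Fin s, M x.1 x.2 * (ν x.1 : α → ℝ) p.1 * (ψ x.2 : β → ℝ) p.2 := by
      intro M
      rw [Fintype.sum_prod_type]
      exact Finset.sum_comm
    rw [e1 A, e1 B, Finset.sum_mul_sum]
    conv_rhs => rw [Fintype.sum_prod_type]
    exact Finset.sum_congr rfl fun x1 _ => Finset.sum_congr rfl fun x2 _ => by ring
  simp only [hfun]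
  rw [integral_finset_sum _ (fun x _ => (((hIν x.1.1 x.2.1).mul_prod (hIψ x.1.2 x.2.2)).const_mul _))]
  have hterm : ∀ x : (Fin q × Fin s) × (Fin q × Fin s),
      ∫ p : α × β, (A x.1.1 x.1.2 * B x.2.1 x.2.2)
          * ((fun a => (ν x.1.1 : α → ℝ) a * (ν x.2.1 : α → ℝ) a) p.1
            * (fun b => (ψ x.1.2 : β → ℝ) b * (ψ x.2.2 : β → ℝ) b) p.2) ∂(μ.prod τ)
      = A x.1.1 x.1.2 * B x.2.1 x.2.2 * ((inner ℝ (ν x.1.1) (ν x.2.1) : ℝ) * (inner ℝ (ψ x.1.2) (ψ x.2.2) : ℝ)) := by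
    intro x
    rw [integral_const_mul,
      integral_prod_mul (fun a => (ν x.1.1 : α → ℝ) a * (ν x.2.1 : α → ℝ) a)
        (fun b => (ψ x.1.2 : β → ℝ) b * (ψ x.2.2 : β → ℝ) b), hinnν, hinnψ]
  simp only [hterm]
  simp only [Fintype.sum_prod_type]
  exact Finset.sum_congr rfl fun i _ => Finset.sum_congr rfl fun j _ =>
    Finset.sum_congr rfl fun k _ => Finset.sum_congr rfl fun l _ => by ring

/-- For `x ∈ S·Y` with coefficient matrix `X`, `M_Y = L_Y L_Yᵀ`, `M_S = L_S L_Sᵀ`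
(`L_Y, L_S` invertible), `VᵀV = I` and `ν̂_k := ∑_i (L_Y^{-ᵀ}V)_{ik} ν_i`:
the `L²((0,T)×Ω)`-orthogonal projection of `x` onto `S·Ŷ` has coefficient matrix
`X̂ = L_Y^{-ᵀ} V Vᵀ L_Yᵀ X` w.r.t. the bases `ν`, `ψ` — i.e. the function with
coefficients `X̂` lies in `S·Ŷ` and `x` minus it is orthogonal to all of `S·Ŷ` —
and the squared projection error equals `‖(I - V Vᵀ) L_Yᵀ X L_S‖_F²`. -/
theorem stmt_6
    {q s qhat : ℕ} {Ω T : Type*} [MeasurableSpace Ω] [MeasurableSpace T]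
    (μ : Measure Ω) (τ : Measure T) [SigmaFinite μ] [SigmaFinite τ]
    (ν : Fin q → Lp ℝ 2 μ) (ψ : Fin s → Lp ℝ 2 τ)
    (hν : LinearIndependent ℝ ν) (hψ : LinearIndependent ℝ ψ)
    (LS : Matrix (Fin s) (Fin s) ℝ) (hLS : IsUnit LS.det)
    (hMS : ∀ i j, (inner ℝ (ψ i) (ψ j) : ℝ) = (LS * LSᵀ) i j)
    (LY : Matrix (Fin q) (Fin q) ℝ) (hLY : IsUnit LY.det)
    (hMY : ∀ i j, (inner ℝ (ν i) (ν j) : ℝ) = (LY * LYᵀ) i j)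
    (V : Matrix (Fin q) (Fin qhat) ℝ) (hV : Vᵀ * V = 1)
    (νhat : Fin qhat → Ω → ℝ)
    (hνhat : ∀ k ξ, νhat k ξ = ∑ i, ((LYᵀ)⁻¹ * V) i k * ν i ξ)
    (X : Matrix (Fin q) (Fin s) ℝ)
    (Xhat : Matrix (Fin q) (Fin s) ℝ)
    (hXhat : Xhat = (LYᵀ)⁻¹ * V * Vᵀ * LYᵀ * X) :
    -- the function with coefficient matrix X̂ lies in S·Ŷ:
    (∃ C : Matrix (Fin qhat) (Fin s) ℝ, ∀ p : Ω × T,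
        (∑ j, ∑ i, Xhat i j * ν i p.1 * ψ j p.2)
          = ∑ j, ∑ k, C k j * νhat k p.1 * ψ j p.2) ∧
    -- x minus it is L²-orthogonal to every element of S·Ŷ:
    (∀ D : Matrix (Fin qhat) (Fin s) ℝ,
        ∫ p : Ω × T,
          ((∑ j, ∑ i, X i j * ν i p.1 * ψ j p.2)
            - ∑ j, ∑ i, Xhat i j * ν i p.1 * ψ j p.2)
          * (∑ j, ∑ k, D k j * νhat k p.1 * ψ j p.2) ∂(μ.prod τ) = 0) ∧
    -- squared projection error:
    (∫ p : Ω × T,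
        ((∑ j, ∑ i, X i j * ν i p.1 * ψ j p.2)
          - ∑ j, ∑ i, Xhat i j * ν i p.1 * ψ j p.2) ^ 2 ∂(μ.prod τ)
      = ∑ i, ∑ j, ((((1 - V * Vᵀ) * LYᵀ * X * LS : Matrix (Fin q) (Fin s) ℝ)) i j) ^ 2) := by
  have hLYT : LYᵀ * (LYᵀ)⁻¹ = 1 := Matrix.mul_nonsing_inv _ (by rwa [Matrix.det_transpose])
  -- rewrite any Ŷ-expansion in terms of ν
  have hWcoef : ∀ (D : Matrix (Fin qhat) (Fin s) ℝ) (p : Ω × T),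
      (∑ j, ∑ k, D k j * νhat k p.1 * (ψ j : T → ℝ) p.2)
        = ∑ j, ∑ i, (((LYᵀ)⁻¹ * V) * D) i j * (ν i : Ω → ℝ) p.1 * (ψ j : T → ℝ) p.2 := by
    intro D p
    refine Finset.sum_congr rfl fun j _ => ?_
    calc ∑ k, D k j * νhat k p.1 * (ψ j : T → ℝ) p.2
        = ∑ k, ∑ i, D k j * (((LYᵀ)⁻¹ * V) i k * (ν i : Ω → ℝ) p.1) * (ψ j : T → ℝ) p.2 := by
          refine Finset.sum_congr rfl fun k _ => ?_
          rw [hνhat, Finset.mul_sum, Finset.sum_mul]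
      _ = ∑ i, ∑ k, D k j * (((LYᵀ)⁻¹ * V) i k * (ν i : Ω → ℝ) p.1) * (ψ j : T → ℝ) p.2 :=
          Finset.sum_comm
      _ = ∑ i, (((LYᵀ)⁻¹ * V) * D) i j * (ν i : Ω → ℝ) p.1 * (ψ j : T → ℝ) p.2 := by
          refine Finset.sum_congr rfl fun i _ => ?_
          rw [Matrix.mul_apply, Finset.sum_mul, Finset.sum_mul]
          exact Finset.sum_congr rfl fun k _ => by ring
  have hsub : ∀ p : Ω × T,
      ((∑ j, ∑ i, X i j * (ν i : Ω → ℝ) p.1 * (ψ j : T → ℝ) p.2)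
        - ∑ j, ∑ i, Xhat i j * (ν i : Ω → ℝ) p.1 * (ψ j : T → ℝ) p.2)
      = ∑ j, ∑ i, (X - Xhat) i j * (ν i : Ω → ℝ) p.1 * (ψ j : T → ℝ) p.2 := by
    intro p
    rw [← Finset.sum_sub_distrib]
    refine Finset.sum_congr rfl fun j _ => ?_
    rw [← Finset.sum_sub_distrib]
    refine Finset.sum_congr rfl fun i _ => ?_
    rw [Matrix.sub_apply]
    ring
  have hXX : LYᵀ * (X - Xhat) * LS = (1 - V * Vᵀ) * LYᵀ * X * LS := by
    rw [hXhat]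
    have h0 : LYᵀ * ((LYᵀ)⁻¹ * (V * (Vᵀ * (LYᵀ * X)))) = V * (Vᵀ * (LYᵀ * X)) := by
      rw [← Matrix.mul_assoc, hLYT, Matrix.one_mul]
    simp only [Matrix.mul_sub, Matrix.sub_mul, Matrix.mul_assoc, Matrix.one_mul, h0]
  -- the zero matrix fact
  have hz : (1 - V * Vᵀ) * V = 0 := by
    rw [Matrix.sub_mul, Matrix.one_mul, Matrix.mul_assoc, hV, Matrix.mul_one, sub_self]
  refine ⟨⟨Vᵀ * LYᵀ * X, fun p => ?_⟩, fun D => ?_, ?_⟩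
  · rw [hWcoef (Vᵀ * LYᵀ * X) p]
    have : ((LYᵀ)⁻¹ * V) * (Vᵀ * LYᵀ * X) = Xhat := by
      rw [hXhat]; simp only [Matrix.mul_assoc]
    rw [this]
  · simp only [hsub, hWcoef]
    rw [key' μ τ ν ψ (X - Xhat) (((LYᵀ)⁻¹ * V) * D)]
    simp only [hMY, hMS]
    rw [quad', hXX]
    have h2 : LYᵀ * (((LYᵀ)⁻¹ * V) * D) * LS = V * (D * LS) := by
      rw [← Matrix.mul_assoc, ← Matrix.mul_assoc, hLYT, Matrix.one_mul, Matrix.mul_assoc]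
    rw [h2, sum_entries']
    have hzz : ((1 - V * Vᵀ) * LYᵀ * X * LS)ᵀ * (V * (D * LS)) = 0 := by
      have hsymm : (1 - V * Vᵀ)ᵀ = 1 - V * Vᵀ := by
        simp [Matrix.transpose_sub, Matrix.transpose_mul, Matrix.transpose_one]
      simp only [Matrix.transpose_mul, hsymm, Matrix.transpose_transpose, Matrix.mul_assoc]
      rw [show (1 - V * Vᵀ) * (V * (D * LS)) = 0 from by
        rw [← Matrix.mul_assoc, hz, Matrix.zero_mul]]
      simp [Matrix.mul_zero]
    rw [hzz, Matrix.trace_zero]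
  · simp only [hsub, pow_two]
    rw [key' μ τ ν ψ (X - Xhat) (X - Xhat)]
    simp only [hMY, hMS]
    rw [quad', hXX]
end

section
/- (Optimal low-rank bases in space.) Let x be an element of the tensor space S·Y with coefficient matrix X ∈ ℝ^{q×s}, let M_Y = L_Y L_Yᵀ and M_S = L_S L_Sᵀ with L_Y, L_S invertible, and let V_{q̂} ∈ ℝ^{q×q̂} be a matrix whose columns are q̂ leading left singular vectors of A := L_Yᵀ X L_S (i.e. orthonormal left singular vectors corresponding to the q̂ largest singular values of A). Define Ŷ := span{ν̂_1,…,ν̂_{q̂}} where ν̂_k := Σ_{i=1}^{q} (L_Y^{-ᵀ} V_{q̂})_{ik} ν_i. Then Ŷ is a best-approximating q̂-dimensional subspace of Y = span{ν_1,…,ν_q}: for every subspace W ⊆ Y with dim W = q̂, it holds that ‖x − Π_{S·Ŷ} x‖_{L²((0,T)×Ω)} ≤ ‖x − Π_{S·W} x‖_{L²((0,T)×Ω)}. -/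
open MeasureTheory Matrix
open scoped BigOperators


private lemma frob_expand {m n : Type*} [Fintype m] [Fintype n] (M : Matrix m n ℝ) :
    Matrix.trace (Mᵀ * M) = ∑ j, ∑ i, (M i j)^2 := by
  simp [Matrix.trace, Matrix.diag, Matrix.mul_apply, Matrix.transpose_apply, sq]

private lemma frob_nonneg {m n : Type*} [Fintype m] [Fintype n] (M : Matrix m n ℝ) :
    0 ≤ Matrix.trace (Mᵀ * M) := by
  rw [frob_expand]
  exact Finset.sum_nonneg fun j _ => Finset.sum_nonneg fun i _ => sq_nonneg _

private lemma frob_zero {m n : Type*} [Fintype m] [Fintype n] (M : Matrix m n ℝ)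
    (h : Matrix.trace (Mᵀ * M) = 0) : M = 0 := by
  rw [frob_expand] at h
  ext i j
  have h1 := (Finset.sum_eq_zero_iff_of_nonneg
    (fun j _ => Finset.sum_nonneg fun i _ => sq_nonneg (M i j))).mp h j (Finset.mem_univ j)
  have h2 := (Finset.sum_eq_zero_iff_of_nonneg (fun i _ => sq_nonneg (M i j))).mp h1 i
    (Finset.mem_univ i)
  exact pow_eq_zero_iff two_ne_zero |>.mp h2

private lemma key_sum {Q Qh : ℕ} (hq : Qh ≤ Q) (d : ℕ → ℝ) (hd0 : ∀ n, 0 ≤ d n)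
    (hdm : ∀ m n : ℕ, m ≤ n → d n ≤ d m) (r : Fin Q → ℝ) (hr0 : ∀ i, 0 ≤ r i)
    (hr1 : ∀ i, r i ≤ 1) (hrs : ∑ i, r i ≤ (Qh : ℝ)) :
    ∑ i : Fin Q, d i * r i ≤ ∑ k : Fin Qh, d k := by
  set t := d Qh with ht
  have h1 : ∀ i : Fin Q, d i * r i ≤ t * r i + (if (i : ℕ) < Qh then d i - t else 0) := by
    intro i
    by_cases hi : (i : ℕ) < Qh
    · rw [if_pos hi]
      have hdt : t ≤ d i := hdm i Qh (le_of_lt hi)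
      nlinarith [hr1 i]
    · rw [if_neg hi]
      have hdt : d i ≤ t := hdm Qh i (le_of_not_gt hi)
      nlinarith [hr0 i]
  have hsd : ∑ i : Fin Q, (if (i : ℕ) < Qh then d i - t else 0)
      = (∑ k : Fin Qh, d k) - Qh * t := by
    rw [Fin.sum_univ_eq_sum_range (fun i => if i < Qh then d i - t else 0) Q]
    rw [← Finset.sum_subset (Finset.range_subset_range.mpr hq)
      (fun x _ hx => by rw [if_neg (by simpa using hx)])]
    rw [Finset.sum_congr rfl (fun x hx => if_pos (Finset.mem_range.mp hx)),
      Finset.sum_sub_distrib, Finset.sum_const, Finset.card_range, nsmul_eq_mul,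
      ← Fin.sum_univ_eq_sum_range (fun i => d i) Qh]
  calc ∑ i : Fin Q, d i * r i
      ≤ ∑ i : Fin Q, (t * r i + (if (i : ℕ) < Qh then d i - t else 0)) :=
        Finset.sum_le_sum fun i _ => h1 i
    _ = t * (∑ i, r i) + ∑ i : Fin Q, (if (i : ℕ) < Qh then d i - t else 0) := by
        rw [Finset.sum_add_distrib, Finset.mul_sum]
    _ ≤ t * Qh + ((∑ k : Fin Qh, d k) - Qh * t) := by
        rw [hsd]
        have := mul_le_mul_of_nonneg_left hrs (hd0 Qh : 0 ≤ t); linarith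
    _ = ∑ k : Fin Qh, d k := by ring

private lemma diag_proj_bounds {n : Type*} [Fintype n] [DecidableEq n]
    (N : Matrix n n ℝ) (hsym : Nᵀ = N) (hidem : N * N = N) (i : n) :
    0 ≤ N i i ∧ N i i ≤ 1 := by
  have hexp : N i i = ∑ j, (N i j)^2 := by
    conv_lhs => rw [← hidem]
    rw [Matrix.mul_apply]
    refine Finset.sum_congr rfl fun j _ => ?_
    have : N j i = N i j := by conv_lhs => rw [← hsym, Matrix.transpose_apply]
    rw [this, sq]
  have h0 : 0 ≤ N i i := hexp ▸ Finset.sum_nonneg fun j _ => sq_nonneg _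
  have h2 : (N i i)^2 ≤ N i i := by
    conv_rhs => rw [hexp]
    exact Finset.single_le_sum (fun j _ => sq_nonneg (N i j)) (Finset.mem_univ i)
  refine ⟨h0, ?_⟩
  nlinarith
open Matrix

private lemma sum_ite_fin {n : ℕ} (m : ℕ) (c : ℝ) :
    ∑ j : Fin n, (if m = (j : ℕ) then c else 0) = if m < n then c else 0 := by
  by_cases h : m < n
  · rw [if_pos h, Finset.sum_eq_single (⟨m, h⟩ : Fin n)]
    · rw [if_pos rfl]
    · intro b _ hb
      exact if_neg fun hc => hb (by apply Fin.ext; simp [← hc])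
    · intro h'; exact absurd (Finset.mem_univ _) h'
  · rw [if_neg h]
    exact Finset.sum_eq_zero fun j _ => if_neg fun hc => h (by rw [hc]; exact j.isLt)

private lemma matrix_ineq {q s qhat : ℕ} (hqhat : qhat ≤ q)
    (A : Matrix (Fin q) (Fin s) ℝ)
    (U : Matrix (Fin q) (Fin q) ℝ) (Wm : Matrix (Fin s) (Fin s) ℝ) (σ : ℕ → ℝ)
    (hU : Uᵀ * U = 1) (hUU : U * Uᵀ = 1) (hW : Wmᵀ * Wm = 1)
    (hσ0 : ∀ n, 0 ≤ σ n) (hσmono : ∀ m n, m ≤ n → σ n ≤ σ m)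
    (hSVD : A = U * (Matrix.of fun (i : Fin q) (j : Fin s) =>
        if (i : ℕ) = (j : ℕ) then σ i else 0) * Wmᵀ)
    (P : Matrix (Fin q) (Fin q) ℝ) (hsym : Pᵀ = P) (hidem : P * P = P)
    (htr : P.trace = qhat)
    (V : Matrix (Fin q) (Fin qhat) ℝ) (hV : ∀ i k, V i k = U i (Fin.castLE hqhat k)) :
    Matrix.trace (Aᵀ * P * A) ≤ Matrix.trace (Aᵀ * (V * Vᵀ) * A) := by
  set dd : ℕ → ℝ := fun n => if n < s then σ n ^ 2 else 0 with hdd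
  have hdd0 : ∀ n, 0 ≤ dd n := by
    intro n; simp only [hdd]; split
    · exact sq_nonneg _
    · exact le_refl 0
  have hddmono : ∀ m n : ℕ, m ≤ n → dd n ≤ dd m := by
    intro m n hmn; simp only [hdd]
    by_cases hn : n < s
    · rw [if_pos hn, if_pos (lt_of_le_of_lt hmn hn)]
      exact pow_le_pow_left₀ (hσ0 n) (hσmono m n hmn) 2
    · rw [if_neg hn]; exact hdd0 m
  set SM : Matrix (Fin q) (Fin s) ℝ := Matrix.of fun (i : Fin q) (j : Fin s) =>
    if (i : ℕ) = (j : ℕ) then σ i else 0 with hSM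
  have hdiag : SM * SMᵀ = Matrix.diagonal (fun i : Fin q => dd i) := by
    ext i i'
    rw [Matrix.mul_apply]
    by_cases hii : i = i'
    · subst hii
      rw [Matrix.diagonal_apply_eq]
      have : ∀ j : Fin s, SM i j * SMᵀ j i = if (i : ℕ) = (j : ℕ) then σ i ^ 2 else 0 := by
        intro j
        simp only [hSM, Matrix.transpose_apply, Matrix.of_apply]
        by_cases hc : (i : ℕ) = (j : ℕ) <;> simp [hc, sq]
      rw [Finset.sum_congr rfl fun j _ => this j, sum_ite_fin]
    · rw [Matrix.diagonal_apply_ne _ hii]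
      refine Finset.sum_eq_zero fun j _ => ?_
      simp only [hSM, Matrix.transpose_apply, Matrix.of_apply]
      by_cases hc : (i : ℕ) = (j : ℕ)
      · rw [if_neg (fun hc' : (i' : ℕ) = (j : ℕ) => hii (Fin.ext (by rw [hc, hc']))), mul_zero]
      · rw [if_neg hc, zero_mul]
  have hAAT : A * Aᵀ = U * Matrix.diagonal (fun i : Fin q => dd i) * Uᵀ := by
    rw [hSVD]
    rw [Matrix.transpose_mul, Matrix.transpose_mul, Matrix.transpose_transpose]
    simp only [← Matrix.mul_assoc]
    rw [Matrix.mul_assoc (U * SM) Wmᵀ Wm, hW, Matrix.mul_one,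
      Matrix.mul_assoc U SM SMᵀ, hdiag]
  have traceform : ∀ Q : Matrix (Fin q) (Fin q) ℝ,
      Matrix.trace (Aᵀ * Q * A) = ∑ i : Fin q, (Uᵀ * Q * U) i i * dd i := by
    intro Q
    rw [Matrix.trace_mul_cycle, hAAT, Matrix.trace_mul_cycle, Matrix.trace_mul_cycle,
      ← Matrix.mul_assoc]
    simp [Matrix.trace, Matrix.diag, Matrix.mul_diagonal]
  have hUV : ∀ (i : Fin q) (k : Fin qhat),
      (Uᵀ * V) i k = if (i : ℕ) = (k : ℕ) then 1 else 0 := by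
    intro i k
    have h1 : (Uᵀ * V) i k = (Uᵀ * U) i (Fin.castLE hqhat k) := by
      simp only [Matrix.mul_apply, Matrix.transpose_apply, hV]
    rw [h1, hU, Matrix.one_apply]
    simp [Fin.ext_iff]
  have hNhat : ∀ i : Fin q, (Uᵀ * (V * Vᵀ) * U) i i = if (i : ℕ) < qhat then 1 else 0 := by
    intro i
    have : Uᵀ * (V * Vᵀ) * U = (Uᵀ * V) * (Uᵀ * V)ᵀ := by
      rw [Matrix.transpose_mul, Matrix.transpose_transpose, ← Matrix.mul_assoc,
        Matrix.mul_assoc (Uᵀ * V)]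
    rw [this, Matrix.mul_apply]
    have : ∀ k : Fin qhat, (Uᵀ * V) i k * (Uᵀ * V)ᵀ k i
        = if (i : ℕ) = (k : ℕ) then 1 else 0 := by
      intro k
      rw [Matrix.transpose_apply, hUV]
      by_cases hc : (i : ℕ) = (k : ℕ) <;> simp [hc]
    rw [Finset.sum_congr rfl fun k _ => this k, sum_ite_fin]
  -- right-hand side equals ∑ k : Fin qhat, dd k
  have hrhs : Matrix.trace (Aᵀ * (V * Vᵀ) * A) = ∑ k : Fin qhat, dd k := by
    rw [traceform]
    rw [Finset.sum_congr rfl fun i (_ : i ∈ Finset.univ) => by rw [hNhat i]]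
    rw [Fin.sum_univ_eq_sum_range (fun n => (if n < qhat then (1:ℝ) else 0) * dd n) q]
    rw [← Finset.sum_subset (Finset.range_subset_range.mpr hqhat)
      (fun x _ hx => by rw [if_neg (by simpa using hx), zero_mul])]
    rw [Finset.sum_congr rfl (fun x hx => by rw [if_pos (Finset.mem_range.mp hx), one_mul])]
    rw [← Fin.sum_univ_eq_sum_range (fun n => dd n) qhat]
  -- the N matrix for P
  set N : Matrix (Fin q) (Fin q) ℝ := Uᵀ * P * U with hN
  have hNsym : Nᵀ = N := by
    rw [hN, Matrix.transpose_mul, Matrix.transpose_mul, Matrix.transpose_transpose, hsym,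
      Matrix.mul_assoc]
  have hNidem : N * N = N := by
    simp only [hN, ← Matrix.mul_assoc]
    rw [Matrix.mul_assoc (Uᵀ * P) U Uᵀ, hUU, Matrix.mul_one, Matrix.mul_assoc Uᵀ P P, hidem]
  have hNtr : N.trace = qhat := by
    rw [hN, Matrix.trace_mul_cycle, hUU, Matrix.one_mul, htr]
  have hbounds := fun i => diag_proj_bounds N hNsym hNidem i
  have hsum : ∑ i, N i i ≤ (qhat : ℝ) := by
    have h : ∑ i, N i i = N.trace := by simp [Matrix.trace, Matrix.diag]
    rw [h, hNtr]
  rw [traceform, hrhs]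
  have := key_sum hqhat dd hdd0 hddmono (fun i => N i i) (fun i => (hbounds i).1)
    (fun i => (hbounds i).2) hsum
  calc ∑ i : Fin q, N i i * dd i = ∑ i : Fin q, dd i * N i i := by
        exact Finset.sum_congr rfl fun i _ => mul_comm _ _
    _ ≤ ∑ k : Fin qhat, dd k := this

private lemma integral_bilin {q s : ℕ} {Ω T : Type*} [MeasurableSpace Ω] [MeasurableSpace T]
    (μ : Measure Ω) (τ : Measure T) [SigmaFinite μ] [SigmaFinite τ]
    (ν : Fin q → Lp ℝ 2 μ) (ψ : Fin s → Lp ℝ 2 τ)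
    (G H : Matrix (Fin q) (Fin s) ℝ) :
    ∫ p : Ω × T, (∑ j, ∑ i, G i j * ν i p.1 * ψ j p.2) * (∑ j, ∑ i, H i j * ν i p.1 * ψ j p.2)
      ∂(μ.prod τ)
    = ∑ j, ∑ j', ∑ i, ∑ i',
        G i j * H i' j' * (((inner ℝ (ν i) (ν i') : ℝ)) * ((inner ℝ (ψ j) (ψ j') : ℝ))) := by
  have hνint : ∀ i i', Integrable (fun a => ν i a * ν i' a) μ := by
    intro i i'
    have := L2.integrable_inner (𝕜 := ℝ) (ν i) (ν i')
    simpa [RCLike.inner_apply, conj_trivial, mul_comm] using this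
  have hψint : ∀ j j', Integrable (fun b => ψ j b * ψ j' b) τ := by
    intro j j'
    have := L2.integrable_inner (𝕜 := ℝ) (ψ j) (ψ j')
    simpa [RCLike.inner_apply, conj_trivial, mul_comm] using this
  have hInt : ∀ (j j' : Fin s) (i i' : Fin q),
      Integrable (fun p : Ω × T =>
        G i j * H i' j' * ((ν i p.1 * ν i' p.1) * (ψ j p.2 * ψ j' p.2))) (μ.prod τ) := by
    intro j j' i i'
    exact ((hνint i i').mul_prod (hψint j j')).const_mul _
  have key : ∀ (j j' : Fin s) (i i' : Fin q),
      ∫ p : Ω × T, (ν i p.1 * ν i' p.1) * (ψ j p.2 * ψ j' p.2) ∂(μ.prod τ)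
        = (inner ℝ (ν i) (ν i') : ℝ) * (inner ℝ (ψ j) (ψ j') : ℝ) := by
    intro j j' i i'
    rw [L2.inner_def, L2.inner_def]
    simp only [RCLike.inner_apply, conj_trivial]
    rw [← integral_prod_mul (fun a => ν i' a * ν i a) (fun b => ψ j' b * ψ j b)]
    congr 1; funext p; ring
  have expand : (fun p : Ω × T =>
      (∑ j, ∑ i, G i j * ν i p.1 * ψ j p.2) * (∑ j, ∑ i, H i j * ν i p.1 * ψ j p.2))
      = fun p : Ω × T => ∑ j, ∑ j', ∑ i, ∑ i',
          G i j * H i' j' * ((ν i p.1 * ν i' p.1) * (ψ j p.2 * ψ j' p.2)) := by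
    funext p
    rw [Finset.sum_mul_sum]
    refine Finset.sum_congr rfl fun j _ => Finset.sum_congr rfl fun j' _ => ?_
    rw [Finset.sum_mul_sum]
    refine Finset.sum_congr rfl fun i _ => Finset.sum_congr rfl fun i' _ => ?_
    ring
  rw [expand]
  rw [integral_finset_sum _ (fun j _ => integrable_finset_sum _ (fun j' _ =>
    integrable_finset_sum _ (fun i _ => integrable_finset_sum _ (fun i' _ => hInt j j' i i'))))]
  refine Finset.sum_congr rfl fun j _ => ?_
  rw [integral_finset_sum _ (fun j' _ =>
    integrable_finset_sum _ (fun i _ => integrable_finset_sum _ (fun i' _ => hInt j j' i i')))]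
  refine Finset.sum_congr rfl fun j' _ => ?_
  rw [integral_finset_sum _ (fun i _ => integrable_finset_sum _ (fun i' _ => hInt j j' i i'))]
  refine Finset.sum_congr rfl fun i _ => ?_
  rw [integral_finset_sum _ (fun i' _ => hInt j j' i i')]
  refine Finset.sum_congr rfl fun i' _ => ?_
  rw [MeasureTheory.integral_const_mul, key]

private lemma sum_to_trace {q s : ℕ} (G H : Matrix (Fin q) (Fin s) ℝ)
    (MY : Matrix (Fin q) (Fin q) ℝ) (MS : Matrix (Fin s) (Fin s) ℝ)
    (hMS : ∀ j j', MS j j' = MS j' j) :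
    ∑ j, ∑ j', ∑ i, ∑ i', G i j * H i' j' * (MY i i' * MS j j')
      = Matrix.trace (Gᵀ * MY * H * MS) := by
  simp only [Matrix.trace, Matrix.diag, Matrix.mul_apply, Matrix.transpose_apply,
    Finset.sum_mul, Finset.mul_sum]
  refine Finset.sum_congr rfl fun j _ => Finset.sum_congr rfl fun j' _ => ?_
  rw [Finset.sum_comm]
  refine Finset.sum_congr rfl fun i' _ => Finset.sum_congr rfl fun i _ => ?_
  rw [hMS j j']
  ring

private lemma lift_eq {q s qhat : ℕ} (P : Matrix (Fin q) (Fin qhat) ℝ)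
    (D : Matrix (Fin qhat) (Fin s) ℝ) (a : Fin q → ℝ) (b : Fin s → ℝ) :
    ∑ j, ∑ k, D k j * (∑ i, P i k * a i) * b j = ∑ j, ∑ i, (P * D) i j * a i * b j := by
  refine Finset.sum_congr rfl fun j _ => ?_
  simp only [Finset.sum_mul, Finset.mul_sum, Matrix.mul_apply]
  rw [Finset.sum_comm]
  refine Finset.sum_congr rfl fun i _ => ?_
  refine Finset.sum_congr rfl fun k _ => ?_
  ring

private lemma resid_eq {q s qhat : ℕ} (X : Matrix (Fin q) (Fin s) ℝ)
    (P : Matrix (Fin q) (Fin qhat) ℝ) (C : Matrix (Fin qhat) (Fin s) ℝ)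
    (a : Fin q → ℝ) (b : Fin s → ℝ) :
    (∑ j, ∑ i, X i j * a i * b j) - ∑ j, ∑ k, C k j * (∑ i, P i k * a i) * b j
      = ∑ j, ∑ i, (X - P * C) i j * a i * b j := by
  rw [lift_eq, ← Finset.sum_sub_distrib]
  refine Finset.sum_congr rfl fun j _ => ?_
  rw [← Finset.sum_sub_distrib]
  refine Finset.sum_congr rfl fun i _ => ?_
  rw [Matrix.sub_apply]
  ring

private lemma gram_unit {q qhat : ℕ} (P : Matrix (Fin q) (Fin qhat) ℝ)
    (hinj : Function.Injective P.mulVec) : IsUnit (Pᵀ * P).det := by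
  rw [← Matrix.isUnit_iff_isUnit_det, ← Matrix.mulVec_injective_iff_isUnit]
  have hker : ∀ u, (Pᵀ * P).mulVec u = 0 → u = 0 := by
    intro u hu
    have h2 : P.mulVec u ⬝ᵥ P.mulVec u = 0 := by
      calc P.mulVec u ⬝ᵥ P.mulVec u = (u ᵥ* Pᵀ) ⬝ᵥ P.mulVec u := by
            rw [Matrix.vecMul_transpose]
        _ = u ⬝ᵥ (Pᵀ.mulVec (P.mulVec u)) := (Matrix.dotProduct_mulVec u Pᵀ _).symm
        _ = u ⬝ᵥ ((Pᵀ * P).mulVec u) := by rw [Matrix.mulVec_mulVec]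
        _ = 0 := by rw [hu, dotProduct_zero]
    have h3 : P.mulVec u = 0 := dotProduct_self_eq_zero.mp h2
    exact hinj (by rw [h3, Matrix.mulVec_zero])
  intro u v huv
  have : (Pᵀ * P).mulVec (u - v) = 0 := by
    rw [Matrix.mulVec_sub, huv, sub_self]
  exact sub_eq_zero.mp (hker _ this)

private lemma proj_error {q s qhat : ℕ} (A : Matrix (Fin q) (Fin s) ℝ)
    (P : Matrix (Fin q) (Fin qhat) ℝ) (C : Matrix (Fin qhat) (Fin s) ℝ)
    (hdet : IsUnit (Pᵀ * P).det) (hOrt : Pᵀ * (A - P * C) = 0) :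
    Matrix.trace ((A - P * C)ᵀ * (A - P * C))
      = Matrix.trace (Aᵀ * A) - Matrix.trace (Aᵀ * (P * (Pᵀ * P)⁻¹ * Pᵀ) * A) ∧
    (P * (Pᵀ * P)⁻¹ * Pᵀ)ᵀ = P * (Pᵀ * P)⁻¹ * Pᵀ ∧
    (P * (Pᵀ * P)⁻¹ * Pᵀ) * (P * (Pᵀ * P)⁻¹ * Pᵀ) = P * (Pᵀ * P)⁻¹ * Pᵀ ∧
    Matrix.trace (P * (Pᵀ * P)⁻¹ * Pᵀ) = qhat := by
  have hG1 : (Pᵀ * P)⁻¹ * (Pᵀ * P) = 1 := Matrix.nonsing_inv_mul _ hdet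
  have hG2 : (Pᵀ * P) * (Pᵀ * P)⁻¹ = 1 := Matrix.mul_nonsing_inv _ hdet
  have hGsym : (Pᵀ * P)ᵀ = Pᵀ * P := by
    rw [Matrix.transpose_mul, Matrix.transpose_transpose]
  have hGinvsym : ((Pᵀ * P)⁻¹)ᵀ = (Pᵀ * P)⁻¹ := by
    rw [Matrix.transpose_nonsing_inv, hGsym]
  have hPA : Pᵀ * A = Pᵀ * P * C := by
    have h := hOrt
    rw [Matrix.mul_sub, sub_eq_zero] at h
    rw [h, Matrix.mul_assoc]
  have hPiA : (P * (Pᵀ * P)⁻¹ * Pᵀ) * A = P * C := by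
    rw [Matrix.mul_assoc (P * (Pᵀ * P)⁻¹) Pᵀ A, hPA,
      ← Matrix.mul_assoc (P * (Pᵀ * P)⁻¹) (Pᵀ * P) C,
      Matrix.mul_assoc P (Pᵀ * P)⁻¹ (Pᵀ * P), hG1, Matrix.mul_one]
  refine ⟨?_, ?_, ?_, ?_⟩
  · have key : (A - P * C)ᵀ * (A - P * C)
        = Aᵀ * A - Aᵀ * (P * C) - ((P * C)ᵀ * A - (P * C)ᵀ * (P * C)) := by
      rw [Matrix.transpose_sub, Matrix.sub_mul, Matrix.mul_sub, Matrix.mul_sub]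
    have e1 : Matrix.trace ((P * C)ᵀ * (P * C)) = Matrix.trace ((P * C)ᵀ * A) := by
      rw [Matrix.transpose_mul, Matrix.mul_assoc Cᵀ Pᵀ (P * C), Matrix.mul_assoc Cᵀ Pᵀ A,
        ← Matrix.mul_assoc Pᵀ P C, ← hPA]
    have e2 : Matrix.trace (Aᵀ * (P * C)) = Matrix.trace ((P * C)ᵀ * A) := by
      rw [← Matrix.trace_transpose (Aᵀ * (P * C)), Matrix.transpose_mul,
        Matrix.transpose_transpose]
    rw [key, Matrix.trace_sub, Matrix.trace_sub, Matrix.trace_sub, e1, sub_self, sub_zero,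
      Matrix.mul_assoc Aᵀ (P * (Pᵀ * P)⁻¹ * Pᵀ) A, hPiA]
  · rw [Matrix.transpose_mul, Matrix.transpose_mul, Matrix.transpose_transpose, hGinvsym,
      ← Matrix.mul_assoc]
  · rw [Matrix.mul_assoc (P * (Pᵀ * P)⁻¹) Pᵀ (P * (Pᵀ * P)⁻¹ * Pᵀ),
      ← Matrix.mul_assoc Pᵀ (P * (Pᵀ * P)⁻¹) Pᵀ, ← Matrix.mul_assoc Pᵀ P (Pᵀ * P)⁻¹, hG2,
      Matrix.one_mul]
  · rw [Matrix.trace_mul_cycle, hG2]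
    simp [Matrix.trace_one]
/-- Optimal low-rank bases in space. Let `x ∈ S·Y` have coefficient matrix `X`,
let `M_Y = L_Y L_Yᵀ`, `M_S = L_S L_Sᵀ` with `L_Y, L_S` invertible, and let
`V_{q̂}` consist of `q̂` leading left singular vectors of `A := L_Yᵀ X L_S`
(encoded by a full SVD `A = U Σ Wᵀ` with decreasingly ordered nonnegative
singular values `σ`, `V_{q̂}` being the first `q̂` columns of `U`). With
`ν̂_k := ∑_i (L_Y^{-ᵀ} V_{q̂})_{ik} ν_i` and `Ŷ = span{ν̂_k}`, the space `Ŷ` is a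
best-approximating `q̂`-dimensional subspace of `Y`: for every `q̂`-dimensional
subspace `W ⊆ Y` (spanned by `w_k = ∑_i B_{ik} ν_i` with linearly independent
columns `B`), the `L²((0,T)×Ω)` error of the orthogonal projection of `x` onto
`S·Ŷ` (characterized by orthogonality of the residual to `S·Ŷ`) is at most the
error of the orthogonal projection of `x` onto `S·W`. -/
theorem stmt_7
    {q s qhat : ℕ} {Ω T : Type*} [MeasurableSpace Ω] [MeasurableSpace T]
    (μ : Measure Ω) (τ : Measure T) [SigmaFinite μ] [SigmaFinite τ]
    (ν : Fin q → Lp ℝ 2 μ) (ψ : Fin s → Lp ℝ 2 τ)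
    (hν : LinearIndependent ℝ ν) (hψ : LinearIndependent ℝ ψ)
    (LS : Matrix (Fin s) (Fin s) ℝ) (hLS : IsUnit LS.det)
    (hMS : ∀ i j, (inner ℝ (ψ i) (ψ j) : ℝ) = (LS * LSᵀ) i j)
    (LY : Matrix (Fin q) (Fin q) ℝ) (hLY : IsUnit LY.det)
    (hMY : ∀ i j, (inner ℝ (ν i) (ν j) : ℝ) = (LY * LYᵀ) i j)
    (X : Matrix (Fin q) (Fin s) ℝ)
    -- an SVD of A = L_Yᵀ X L_S with decreasingly ordered singular values:
    (U : Matrix (Fin q) (Fin q) ℝ) (W : Matrix (Fin s) (Fin s) ℝ) (σ : ℕ → ℝ)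
    (hU : Uᵀ * U = 1) (hUU : U * Uᵀ = 1) (hW : Wᵀ * W = 1) (hWW : W * Wᵀ = 1)
    (hσ0 : ∀ n, 0 ≤ σ n) (hσmono : ∀ m n, m ≤ n → σ n ≤ σ m)
    (hSVD : LYᵀ * X * LS
        = U * (Matrix.of fun (i : Fin q) (j : Fin s) =>
            if (i : ℕ) = (j : ℕ) then σ i else 0) * Wᵀ)
    (hqhat : qhat ≤ q)
    -- V_{q̂}: the q̂ leading left singular vectors:
    (V : Matrix (Fin q) (Fin qhat) ℝ)
    (hV : ∀ i k, V i k = U i (Fin.castLE hqhat k))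
    -- Π_{S·Ŷ} x, with coefficients Ĉ w.r.t. the basis {ν̂_k ψ_j} of S·Ŷ,
    -- characterized by residual orthogonality to S·Ŷ:
    (Chat : Matrix (Fin qhat) (Fin s) ℝ)
    (hChat : ∀ D : Matrix (Fin qhat) (Fin s) ℝ,
      ∫ p : Ω × T,
        ((∑ j, ∑ i, X i j * ν i p.1 * ψ j p.2)
          - ∑ j, ∑ k, Chat k j * (∑ i, ((LYᵀ)⁻¹ * V) i k * ν i p.1) * ψ j p.2)
        * (∑ j, ∑ k, D k j * (∑ i, ((LYᵀ)⁻¹ * V) i k * ν i p.1) * ψ j p.2)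
        ∂(μ.prod τ) = 0)
    -- an arbitrary q̂-dimensional subspace W ⊆ Y, spanned by the columns of B:
    (B : Matrix (Fin q) (Fin qhat) ℝ)
    (hB : LinearIndependent ℝ (fun k : Fin qhat => fun i : Fin q => B i k))
    -- Π_{S·W} x, with coefficients C, characterized by residual orthogonality:
    (C : Matrix (Fin qhat) (Fin s) ℝ)
    (hC : ∀ D : Matrix (Fin qhat) (Fin s) ℝ,
      ∫ p : Ω × T,
        ((∑ j, ∑ i, X i j * ν i p.1 * ψ j p.2)
          - ∑ j, ∑ k, C k j * (∑ i, B i k * ν i p.1) * ψ j p.2)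
        * (∑ j, ∑ k, D k j * (∑ i, B i k * ν i p.1) * ψ j p.2)
        ∂(μ.prod τ) = 0) :
    ∫ p : Ω × T,
        ((∑ j, ∑ i, X i j * ν i p.1 * ψ j p.2)
          - ∑ j, ∑ k, Chat k j * (∑ i, ((LYᵀ)⁻¹ * V) i k * ν i p.1) * ψ j p.2) ^ 2
        ∂(μ.prod τ)
      ≤ ∫ p : Ω × T,
        ((∑ j, ∑ i, X i j * ν i p.1 * ψ j p.2)
          - ∑ j, ∑ k, C k j * (∑ i, B i k * ν i p.1) * ψ j p.2) ^ 2
        ∂(μ.prod τ) := by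
  classical
  have hLS1 : LS⁻¹ * LS = 1 := Matrix.nonsing_inv_mul LS hLS
  have hLYT : LYᵀ * (LYᵀ)⁻¹ = 1 :=
    Matrix.mul_nonsing_inv _ (by rwa [Matrix.det_transpose])
  have hMSsym : ∀ j j' : Fin s, (LS * LSᵀ) j j' = (LS * LSᵀ) j' j := by
    intro j j'
    have h : (LS * LSᵀ)ᵀ = LS * LSᵀ := by
      rw [Matrix.transpose_mul, Matrix.transpose_transpose]
    rw [← Matrix.transpose_apply (LS * LSᵀ) j' j, h]
  have master : ∀ G H : Matrix (Fin q) (Fin s) ℝ,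
      (∫ p : Ω × T, (∑ j, ∑ i, G i j * ν i p.1 * ψ j p.2) *
        (∑ j, ∑ i, H i j * ν i p.1 * ψ j p.2) ∂(μ.prod τ))
      = Matrix.trace ((LYᵀ * G * LS)ᵀ * (LYᵀ * H * LS)) := by
    intro G H
    rw [integral_bilin μ τ ν ψ G H]
    have h1 : ∑ j, ∑ j', ∑ i, ∑ i', G i j * H i' j' *
        ((inner ℝ (ν i) (ν i') : ℝ) * (inner ℝ (ψ j) (ψ j') : ℝ))
        = ∑ j, ∑ j', ∑ i, ∑ i', G i j * H i' j' * ((LY * LYᵀ) i i' * (LS * LSᵀ) j j') := by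
      simp only [hMY, hMS]
    rw [h1, sum_to_trace G H (LY * LYᵀ) (LS * LSᵀ) hMSsym]
    have e1 : (LYᵀ * G * LS)ᵀ * (LYᵀ * H * LS)
        = LSᵀ * (Gᵀ * (LY * (LYᵀ * (H * LS)))) := by
      rw [Matrix.transpose_mul, Matrix.transpose_mul, Matrix.transpose_transpose]
      simp only [Matrix.mul_assoc]
    rw [e1, Matrix.trace_mul_comm]
    simp only [← Matrix.mul_assoc]
    rw [Matrix.trace_mul_comm (LSᵀ * Gᵀ * LY * LYᵀ * H) LS]
    simp only [← Matrix.mul_assoc]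
  have hlift : ∀ (P : Matrix (Fin q) (Fin qhat) ℝ) (D : Matrix (Fin qhat) (Fin s) ℝ)
      (p : Ω × T),
      (∑ j, ∑ k, D k j * (∑ i, P i k * ν i p.1) * ψ j p.2)
        = ∑ j, ∑ i, (P * D) i j * ν i p.1 * ψ j p.2 :=
    fun P D p => lift_eq P D (fun i => ν i p.1) (fun j => ψ j p.2)
  have hsub : ∀ (M N : Matrix (Fin q) (Fin s) ℝ) (p : Ω × T),
      (∑ j, ∑ i, M i j * ν i p.1 * ψ j p.2) - (∑ j, ∑ i, N i j * ν i p.1 * ψ j p.2)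
        = ∑ j, ∑ i, (M - N) i j * ν i p.1 * ψ j p.2 := by
    intro M N p
    rw [← Finset.sum_sub_distrib]
    refine Finset.sum_congr rfl fun j _ => ?_
    rw [← Finset.sum_sub_distrib]
    refine Finset.sum_congr rfl fun i _ => ?_
    rw [Matrix.sub_apply]
    ring
  simp only [pow_two] at *
  simp only [hlift, hsub] at hChat hC ⊢
  simp only [master] at hChat hC ⊢
  have hexp1 : ∀ (P : Matrix (Fin q) (Fin qhat) ℝ) (M : Matrix (Fin qhat) (Fin s) ℝ),
      LYᵀ * (P * M) * LS = (LYᵀ * P) * (M * LS) := by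
    intro P M
    rw [← Matrix.mul_assoc LYᵀ P M, Matrix.mul_assoc (LYᵀ * P) M LS]
  have hexp2 : ∀ (P : Matrix (Fin q) (Fin qhat) ℝ) (M : Matrix (Fin qhat) (Fin s) ℝ),
      LYᵀ * (X - P * M) * LS = LYᵀ * X * LS - (LYᵀ * P) * (M * LS) := by
    intro P M
    rw [Matrix.mul_sub, Matrix.sub_mul, hexp1]
  have hVP : LYᵀ * ((LYᵀ)⁻¹ * V) = V := by
    rw [← Matrix.mul_assoc, hLYT, Matrix.one_mul]
  simp only [hexp2, hexp1, hVP] at hChat hC ⊢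
  set A : Matrix (Fin q) (Fin s) ℝ := LYᵀ * X * LS with hA
  -- orthogonality in matrix form
  have hOrtGen : ∀ (P : Matrix (Fin q) (Fin qhat) ℝ) (R : Matrix (Fin q) (Fin s) ℝ),
      (∀ D : Matrix (Fin qhat) (Fin s) ℝ, Matrix.trace (Rᵀ * (P * (D * LS))) = 0) →
      Pᵀ * R = 0 := by
    intro P R h
    apply frob_zero
    have h2 := h (Pᵀ * R * LS⁻¹)
    rw [Matrix.mul_assoc (Pᵀ * R) LS⁻¹ LS, hLS1, Matrix.mul_one] at h2
    rw [Matrix.transpose_mul, Matrix.transpose_transpose, Matrix.mul_assoc]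
    exact h2
  have hOrtHat : Vᵀ * (A - V * (Chat * LS)) = 0 := hOrtGen V _ (fun D => hChat D)
  have hOrtW : (LYᵀ * B)ᵀ * (A - (LYᵀ * B) * (C * LS)) = 0 := hOrtGen (LYᵀ * B) _ (fun D => hC D)
  -- V has orthonormal columns
  have hVtV : Vᵀ * V = 1 := by
    ext k l
    have h1 : (Vᵀ * V) k l = (Uᵀ * U) (Fin.castLE hqhat k) (Fin.castLE hqhat l) := by
      simp only [Matrix.mul_apply, Matrix.transpose_apply, hV]
    rw [h1, hU]
    simp only [Matrix.one_apply]
    by_cases hkl : k = l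
    · rw [if_pos hkl, if_pos (by rw [hkl])]
    · rw [if_neg hkl, if_neg (fun hc => hkl (by
        apply Fin.ext
        have := congrArg (Fin.val) hc
        simpa using this))]
  have hdetHat : IsUnit (Vᵀ * V).det := by rw [hVtV]; simp
  have hPiHat : V * (Vᵀ * V)⁻¹ * Vᵀ = V * Vᵀ := by
    have h1 : (1 : Matrix (Fin qhat) (Fin qhat) ℝ)⁻¹ = 1 :=
      Matrix.inv_eq_left_inv (by simp)
    rw [hVtV, h1, Matrix.mul_one]
  -- injectivity for the W side
  have hBinj : Function.Injective B.mulVec := Matrix.mulVec_injective_iff.mpr hB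
  have hLYinj : Function.Injective (LYᵀ).mulVec :=
    Matrix.mulVec_injective_iff_isUnit.mpr ((Matrix.isUnit_iff_isUnit_det _).mpr
      (by rwa [Matrix.det_transpose]))
  have hinjW : Function.Injective (LYᵀ * B).mulVec := by
    intro u v huv
    apply hBinj
    apply hLYinj
    rw [Matrix.mulVec_mulVec, Matrix.mulVec_mulVec]
    exact huv
  have hdetW : IsUnit ((LYᵀ * B)ᵀ * (LYᵀ * B)).det := gram_unit _ hinjW
  obtain ⟨eh, -, -, -⟩ := proj_error A V (Chat * LS) hdetHat hOrtHat
  obtain ⟨ew, wsym, widem, wtr⟩ := proj_error A (LYᵀ * B) (C * LS) hdetW hOrtW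
  have hmain := matrix_ineq hqhat A U W σ hU hUU hW hσ0 hσmono hSVD
    ((LYᵀ * B) * ((LYᵀ * B)ᵀ * (LYᵀ * B))⁻¹ * (LYᵀ * B)ᵀ) wsym widem wtr V hV
  rw [eh, ew, hPiHat]
  exact sub_le_sub_left hmain _
end

section
/- (Optimal low-rank bases in time.) Let x be an element of the tensor space S·Y with coefficient matrix X ∈ ℝ^{q×s}, let M_Y = L_Y L_Yᵀ and M_S = L_S L_Sᵀ with L_Y, L_S invertible, and let U_{ŝ} ∈ ℝ^{s×ŝ} be a matrix whose columns are ŝ leading right singular vectors of A := L_Yᵀ X L_S (i.e. orthonormal right singular vectors corresponding to the ŝ largest singular values of A). Define Ŝ := span{ψ̂_1,…,ψ̂_{ŝ}} where ψ̂_k := Σ_{j=1}^{s} (L_S^{-ᵀ} U_{ŝ})_{jk} ψ_j. Then Ŝ is a best-approximating ŝ-dimensional subspace of S = span{ψ_1,…,ψ_s}: for every subspace R ⊆ S with dim R = ŝ, it holds that ‖x − Π_{Ŝ·Y} x‖_{L²((0,T)×Ω)} ≤ ‖x − Π_{R·Y} x‖_{L²((0,T)×Ω)}. -/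
open MeasureTheory Matrix
open scoped BigOperators


namespace Stmt8Aux

variable {m n p t : Type*} [Fintype m] [Fintype n] [Fintype p] [Fintype t]

/-- Frobenius inner product. -/
noncomputable def fip (A B : Matrix m n ℝ) : ℝ := Matrix.trace (Aᵀ * B)

lemma fip_def (A B : Matrix m n ℝ) : fip A B = Matrix.trace (Aᵀ * B) := rfl

lemma fip_eq_sum (A B : Matrix m n ℝ) : fip A B = ∑ j, ∑ i, A i j * B i j := by
  simp [fip, Matrix.trace, Matrix.mul_apply, Matrix.diag]

lemma fip_comm (A B : Matrix m n ℝ) : fip A B = fip B A := by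
  rw [fip, ← Matrix.trace_transpose, Matrix.transpose_mul, Matrix.transpose_transpose, fip]

lemma fip_mul_right (A : Matrix m n ℝ) (P : Matrix n p ℝ) (N : Matrix m p ℝ) :
    fip (A * P) N = fip A (N * Pᵀ) := by
  rw [fip, fip, Matrix.transpose_mul, Matrix.mul_assoc, Matrix.trace_mul_comm,
    Matrix.mul_assoc]

lemma fip_mul_left (P : Matrix m n ℝ) (A : Matrix n p ℝ) (N : Matrix m p ℝ) :
    fip (P * A) N = fip A (Pᵀ * N) := by
  rw [fip, fip, Matrix.transpose_mul, Matrix.mul_assoc]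

lemma fip_sub_left (A B C : Matrix m n ℝ) : fip (A - B) C = fip A C - fip B C := by
  simp [fip, Matrix.transpose_sub, Matrix.sub_mul]

lemma fip_sub_right (A B C : Matrix m n ℝ) : fip A (B - C) = fip A B - fip A C := by
  simp [fip, Matrix.mul_sub]

@[simp] lemma fip_zero_left (B : Matrix m n ℝ) : fip (0 : Matrix m n ℝ) B = 0 := by
  simp [fip]

lemma fip_self_nonneg (A : Matrix m n ℝ) : 0 ≤ fip A A := by
  rw [fip_eq_sum]
  exact Finset.sum_nonneg fun j _ => Finset.sum_nonneg fun i _ => mul_self_nonneg _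

lemma eq_zero_of_fip_self (A : Matrix m n ℝ) (h : fip A A = 0) : A = 0 := by
  rw [fip_eq_sum] at h
  ext i j
  have h1 : ∀ j ∈ Finset.univ, (0:ℝ) ≤ ∑ i, A i j * A i j :=
    fun j _ => Finset.sum_nonneg fun i _ => mul_self_nonneg _
  have h2 := (Finset.sum_eq_zero_iff_of_nonneg h1).mp h j (Finset.mem_univ j)
  have h3 := (Finset.sum_eq_zero_iff_of_nonneg
    (fun i _ => mul_self_nonneg (A i j))).mp h2 i (Finset.mem_univ i)
  simpa [mul_self_eq_zero] using h3


section Proj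

variable [DecidableEq t]

@[simp] lemma fip_zero_right (B : Matrix m n ℝ) : fip B (0 : Matrix m n ℝ) = 0 := by
  simp [fip]

lemma proj_orth {A : Matrix m n ℝ} {M : Matrix n t ℝ} (hM : IsUnit (Mᵀ * M).det)
    (D : Matrix m t ℝ) :
    fip (A - A * (M * (Mᵀ * M)⁻¹ * Mᵀ)) (D * Mᵀ) = 0 := by
  have h2 : (A - A * (M * (Mᵀ * M)⁻¹ * Mᵀ)) * M = 0 := by
    rw [Matrix.sub_mul]
    have : A * (M * (Mᵀ * M)⁻¹ * Mᵀ) * M = A * M := by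
      simp only [Matrix.mul_assoc]
      rw [Matrix.nonsing_inv_mul _ hM, Matrix.mul_one]
    rw [this, sub_self]
  calc fip (A - A * (M * (Mᵀ * M)⁻¹ * Mᵀ)) (D * Mᵀ)
      = fip (D * Mᵀ) (A - A * (M * (Mᵀ * M)⁻¹ * Mᵀ)) := fip_comm _ _
    _ = fip D ((A - A * (M * (Mᵀ * M)⁻¹ * Mᵀ)) * Mᵀᵀ) := fip_mul_right _ _ _
    _ = 0 := by rw [Matrix.transpose_transpose, h2, fip_zero_right]

lemma proj_eq {A : Matrix m n ℝ} {M : Matrix n t ℝ} (hM : IsUnit (Mᵀ * M).det)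
    {C : Matrix m t ℝ} (hC : ∀ D : Matrix m t ℝ, fip (A - C * Mᵀ) (D * Mᵀ) = 0) :
    C * Mᵀ = A * (M * (Mᵀ * M)⁻¹ * Mᵀ) := by
  set Q : Matrix n n ℝ := M * (Mᵀ * M)⁻¹ * Mᵀ with hQ
  have hdiff : C * Mᵀ - A * Q = (C - A * M * (Mᵀ * M)⁻¹) * Mᵀ := by
    rw [Matrix.sub_mul, hQ]
    simp only [Matrix.mul_assoc]
  have e : C * Mᵀ - A * Q = (A - A * Q) - (A - C * Mᵀ) := by abel
  have hz : fip (C * Mᵀ - A * Q) (C * Mᵀ - A * Q) = 0 := by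
    calc fip (C * Mᵀ - A * Q) (C * Mᵀ - A * Q)
        = fip (C * Mᵀ - A * Q) ((A - A * Q) - (A - C * Mᵀ)) := by rw [← e]
      _ = fip (C * Mᵀ - A * Q) (A - A * Q) - fip (C * Mᵀ - A * Q) (A - C * Mᵀ) :=
          fip_sub_right _ _ _
      _ = fip (A - A * Q) (C * Mᵀ - A * Q) - fip (A - C * Mᵀ) (C * Mᵀ - A * Q) := by
          rw [fip_comm (C * Mᵀ - A * Q) (A - A * Q), fip_comm (C * Mᵀ - A * Q) (A - C * Mᵀ)]
      _ = 0 := by rw [hdiff, proj_orth hM, hC, sub_zero]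
  have h0 : C * Mᵀ - A * Q = 0 := eq_zero_of_fip_self _ hz
  rw [sub_eq_zero] at h0
  exact h0

lemma Q_symm {M : Matrix n t ℝ} : (M * (Mᵀ * M)⁻¹ * Mᵀ)ᵀ = M * (Mᵀ * M)⁻¹ * Mᵀ := by
  rw [Matrix.transpose_mul, Matrix.transpose_mul, Matrix.transpose_transpose,
    Matrix.transpose_nonsing_inv, Matrix.transpose_mul, Matrix.transpose_transpose]
  simp only [Matrix.mul_assoc]

lemma Q_idem {M : Matrix n t ℝ} (hM : IsUnit (Mᵀ * M).det) :
    (M * (Mᵀ * M)⁻¹ * Mᵀ) * (M * (Mᵀ * M)⁻¹ * Mᵀ) = M * (Mᵀ * M)⁻¹ * Mᵀ := by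
  simp only [Matrix.mul_assoc]
  rw [← Matrix.mul_assoc Mᵀ M ((Mᵀ * M)⁻¹ * Mᵀ), ← Matrix.mul_assoc (Mᵀ * M) (Mᵀ * M)⁻¹ Mᵀ,
    Matrix.mul_nonsing_inv _ hM, Matrix.one_mul]

lemma proj_norm {A : Matrix m n ℝ} {M : Matrix n t ℝ} (hM : IsUnit (Mᵀ * M).det)
    {C : Matrix m t ℝ} (hC : ∀ D : Matrix m t ℝ, fip (A - C * Mᵀ) (D * Mᵀ) = 0) :
    fip (A - C * Mᵀ) (A - C * Mᵀ) = fip A A - fip A (A * (M * (Mᵀ * M)⁻¹ * Mᵀ)) := by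
  set Q : Matrix n n ℝ := M * (Mᵀ * M)⁻¹ * Mᵀ with hQ
  set P : Matrix m n ℝ := C * Mᵀ with hP
  have hPA : fip P A = fip P P := by
    have h := hC C
    rw [← hP] at h
    have := fip_sub_right P A P
    have hcomm : fip P (A - P) = fip (A - P) P := fip_comm _ _
    rw [hcomm, h] at this
    linarith [this]
  have expand : fip (A - P) (A - P) = fip A A - fip P A - (fip P A - fip P P) := by
    rw [fip_sub_left, fip_sub_right, fip_sub_right]
    have : fip A P = fip P A := fip_comm _ _
    rw [this]
  have hPP : fip P P = fip A (A * Q) := by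
    have hPe : P = A * Q := proj_eq hM hC
    rw [hPe]
    calc fip (A * Q) (A * Q) = fip A ((A * Q) * Qᵀ) := fip_mul_right _ _ _
      _ = fip A (A * (Q * Q)) := by rw [Q_symm, Matrix.mul_assoc]
      _ = fip A (A * Q) := by rw [Q_idem hM]
  rw [expand, hPA, sub_self, sub_zero, hPP]

end Proj


section Ineq

lemma gram_unit {s t : ℕ} (M : Matrix (Fin s) (Fin t) ℝ)
    (h : ∀ v : Fin t → ℝ, M *ᵥ v = 0 → v = 0) : IsUnit (Mᵀ * M).det := by
  rw [isUnit_iff_ne_zero]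
  intro hdet
  obtain ⟨v, hv0, hveq⟩ := (Matrix.exists_mulVec_eq_zero_iff).mpr hdet
  have h1 : v ⬝ᵥ ((Mᵀ * M) *ᵥ v) = 0 := by rw [hveq, dotProduct_zero]
  rw [← Matrix.mulVec_mulVec, Matrix.dotProduct_mulVec, Matrix.vecMul_transpose,
    dotProduct_self_eq_zero] at h1
  exact hv0 (h v h1)

lemma sum_indicator_eq {s shat : ℕ} (hshat : shat ≤ s) (f : Fin s → ℝ) :
    ∑ j : Fin s, (if (j : ℕ) < shat then f j else 0)
      = ∑ k : Fin shat, f (Fin.castLE hshat k) := by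
  classical
  set F : ℕ → ℝ := fun n => if h : n < s then f ⟨n, h⟩ else 0 with hF
  have hrange : (Finset.range s).filter (fun n => n < shat) = Finset.range shat := by
    ext n; simp [Finset.mem_filter, Finset.mem_range]; omega
  have h1 : ∑ j : Fin s, (if (j : ℕ) < shat then f j else 0)
      = ∑ n ∈ Finset.range s, (if n < shat then F n else 0) := by
    rw [← Fin.sum_univ_eq_sum_range (fun n => if n < shat then F n else 0) s]
    refine Finset.sum_congr rfl fun j _ => ?_
    by_cases hj : (j : ℕ) < shat
    · simp [hj, hF, j.isLt, Fin.eta]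
    · simp [hj]
  have h2 : ∑ k : Fin shat, f (Fin.castLE hshat k) = ∑ n ∈ Finset.range shat, F n := by
    rw [← Fin.sum_univ_eq_sum_range F shat]
    refine Finset.sum_congr rfl fun k _ => ?_
    have hk : (k : ℕ) < s := lt_of_lt_of_le k.isLt hshat
    simp [hF, hk]
    rfl
  rw [h1, h2, ← Finset.sum_filter, hrange]

lemma sum_dt_le {s shat : ℕ} (hshat : shat ≤ s) (d tt : Fin s → ℝ)
    (hd0 : ∀ j, 0 ≤ d j) (hdmono : ∀ i j : Fin s, i ≤ j → d j ≤ d i)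
    (ht0 : ∀ j, 0 ≤ tt j) (ht1 : ∀ j, tt j ≤ 1)
    (hsum : ∑ j, tt j = (shat : ℝ)) :
    ∑ j, d j * tt j ≤ ∑ k : Fin shat, d (Fin.castLE hshat k) := by
  classical
  set lam : ℝ := if h : shat < s then d ⟨shat, h⟩ else 0 with hlam
  have hlam0 : 0 ≤ lam := by
    rw [hlam]; split
    · exact hd0 _
    · exact le_refl 0
  have key : ∀ j : Fin s,
      d j * tt j ≤ (if (j : ℕ) < shat then d j else 0)
        + lam * (tt j - if (j : ℕ) < shat then 1 else 0) := by
    intro j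
    by_cases hj : (j : ℕ) < shat
    · simp only [hj, if_pos]
      have hlamd : lam ≤ d j := by
        rw [hlam]; split
        · rename_i h
          exact hdmono j ⟨shat, h⟩ (by simp [Fin.le_def]; omega)
        · exact hd0 j
      nlinarith [ht1 j]
    · simp only [hj, if_neg, not_false_iff]
      have hs' : shat < s := lt_of_le_of_lt (not_lt.mp hj) j.isLt
      have hdj : d j ≤ lam := by
        rw [hlam, dif_pos hs']
        exact hdmono ⟨shat, hs'⟩ j (by simp [Fin.le_def]; omega)
      nlinarith [ht0 j]
  calc ∑ j, d j * tt j
      ≤ ∑ j : Fin s, ((if (j : ℕ) < shat then d j else 0)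
          + lam * (tt j - if (j : ℕ) < shat then 1 else 0)) :=
        Finset.sum_le_sum fun j _ => key j
    _ = ∑ j : Fin s, (if (j : ℕ) < shat then d j else 0)
          + lam * (∑ j, tt j - ∑ j : Fin s, (if (j : ℕ) < shat then (1:ℝ) else 0)) := by
        rw [Finset.sum_add_distrib, ← Finset.mul_sum, Finset.sum_sub_distrib]
    _ = ∑ k : Fin shat, d (Fin.castLE hshat k) := by
        rw [sum_indicator_eq hshat, sum_indicator_eq hshat (fun _ => (1:ℝ)), hsum]
        simp
end Ineq


section Sums

lemma sum_expand {q s t : ℕ} (Cm : Matrix (Fin q) (Fin t) ℝ) (Gm : Matrix (Fin s) (Fin t) ℝ)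
    (a : Fin q → ℝ) (b : Fin s → ℝ) :
    (∑ k, ∑ i, Cm i k * a i * (∑ j, Gm j k * b j))
      = ∑ j, ∑ i, (Cm * Gmᵀ) i j * a i * b j := by
  have L : (∑ k, ∑ i, Cm i k * a i * (∑ j, Gm j k * b j))
      = ∑ k, ∑ i, ∑ j, Cm i k * Gm j k * a i * b j := by
    refine Finset.sum_congr rfl fun k _ => Finset.sum_congr rfl fun i _ => ?_
    rw [Finset.mul_sum]
    exact Finset.sum_congr rfl fun j _ => by ring
  have R : (∑ j, ∑ i, (Cm * Gmᵀ) i j * a i * b j)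
      = ∑ j, ∑ i, ∑ k, Cm i k * Gm j k * a i * b j := by
    refine Finset.sum_congr rfl fun j _ => Finset.sum_congr rfl fun i _ => ?_
    rw [Matrix.mul_apply, Finset.sum_mul, Finset.sum_mul]
    exact Finset.sum_congr rfl fun k _ => by rw [Matrix.transpose_apply]
  rw [L, R]
  calc ∑ k, ∑ i, ∑ j, Cm i k * Gm j k * a i * b j
      = ∑ i, ∑ k, ∑ j, Cm i k * Gm j k * a i * b j := Finset.sum_comm
    _ = ∑ i, ∑ j, ∑ k, Cm i k * Gm j k * a i * b j :=
        Finset.sum_congr rfl fun i _ => Finset.sum_comm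
    _ = ∑ j, ∑ i, ∑ k, Cm i k * Gm j k * a i * b j := Finset.sum_comm

lemma fip_expand {q s : ℕ} (E F : Matrix (Fin q) (Fin s) ℝ)
    (MY : Matrix (Fin q) (Fin q) ℝ) (MS : Matrix (Fin s) (Fin s) ℝ)
    (hMSsym : ∀ a b, MS a b = MS b a) :
    ∑ j, ∑ i, ∑ l, ∑ k, E i j * F k l * (MY i k * MS j l) = fip E (MY * F * MS) := by
  rw [fip_eq_sum]
  refine Finset.sum_congr rfl fun j _ => Finset.sum_congr rfl fun i _ => ?_
  rw [Matrix.mul_assoc, Matrix.mul_apply, Finset.mul_sum, Finset.sum_comm]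
  refine Finset.sum_congr rfl fun k _ => ?_
  rw [Matrix.mul_apply, Finset.mul_sum, Finset.mul_sum]
  refine Finset.sum_congr rfl fun l _ => ?_
  rw [hMSsym j l]
  ring

end Sums

section Analysis

variable {Ωt Tt : Type*} [MeasurableSpace Ωt] [MeasurableSpace Tt]

lemma lp_mul_integrable (μ : Measure Ωt) (f g : Lp ℝ 2 μ) :
    Integrable (fun a => f a * g a) μ := by
  have h := MeasureTheory.L2.integrable_inner (𝕜 := ℝ) g f
  simpa [RCLike.inner_apply] using h

lemma integral_key (μ : Measure Ωt) (τ : Measure Tt) [SigmaFinite μ] [SigmaFinite τ]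
    {q s : ℕ} (ν : Fin q → Lp ℝ 2 μ) (ψ : Fin s → Lp ℝ 2 τ)
    (E F : Matrix (Fin q) (Fin s) ℝ) :
    ∫ p : Ωt × Tt,
        (∑ j, ∑ i, E i j * ν i p.1 * ψ j p.2) * (∑ j, ∑ i, F i j * ν i p.1 * ψ j p.2)
        ∂(μ.prod τ)
      = ∑ j, ∑ i, ∑ l, ∑ k,
          E i j * F k l * ((∫ w, ν i w * ν k w ∂μ) * (∫ x, ψ j x * ψ l x ∂τ)) := by
  have hint : ∀ (i k : Fin q) (j l : Fin s),
      Integrable (fun p : Ωt × Tt =>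
        (E i j * F k l) * ((ν i p.1 * ν k p.1) * (ψ j p.2 * ψ l p.2))) (μ.prod τ) :=
    fun i k j l =>
      (((lp_mul_integrable μ (ν i) (ν k)).mul_prod
        (lp_mul_integrable τ (ψ j) (ψ l)))).const_mul _
  have hpt : (fun p : Ωt × Tt =>
      (∑ j, ∑ i, E i j * ν i p.1 * ψ j p.2) * (∑ j, ∑ i, F i j * ν i p.1 * ψ j p.2))
      = fun p => ∑ j, ∑ i, ∑ l, ∑ k,
          (E i j * F k l) * ((ν i p.1 * ν k p.1) * (ψ j p.2 * ψ l p.2)) := by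
    funext p
    simp only [Finset.sum_mul]
    simp only [Finset.mul_sum]
    refine Finset.sum_congr rfl fun j _ => Finset.sum_congr rfl fun i _ =>
      Finset.sum_congr rfl fun l _ => Finset.sum_congr rfl fun k _ => by ring
  rw [hpt]
  rw [integral_finset_sum _ (fun j _ => integrable_finset_sum _ (fun i _ =>
    integrable_finset_sum _ (fun l _ => integrable_finset_sum _ (fun k _ => hint i k j l))))]
  refine Finset.sum_congr rfl fun j _ => ?_
  rw [integral_finset_sum _ (fun i _ =>
    integrable_finset_sum _ (fun l _ => integrable_finset_sum _ (fun k _ => hint i k j l)))]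
  refine Finset.sum_congr rfl fun i _ => ?_
  rw [integral_finset_sum _ (fun l _ => integrable_finset_sum _ (fun k _ => hint i k j l))]
  refine Finset.sum_congr rfl fun l _ => ?_
  rw [integral_finset_sum _ (fun k _ => hint i k j l)]
  refine Finset.sum_congr rfl fun k _ => ?_
  rw [MeasureTheory.integral_const_mul]
  congr 1
  exact integral_prod_mul (fun w => ν i w * ν k w) (fun x => ψ j x * ψ l x)

end Analysis


section SVD

lemma sigma_gram {q s : ℕ} (σ : ℕ → ℝ) :
    (Matrix.of fun (i : Fin q) (j : Fin s) => if (i : ℕ) = (j : ℕ) then σ i else 0)ᵀ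
      * (Matrix.of fun (i : Fin q) (j : Fin s) => if (i : ℕ) = (j : ℕ) then σ i else 0)
    = Matrix.diagonal (fun j : Fin s => if (j : ℕ) < q then σ (j : ℕ) ^ 2 else 0) := by
  ext j l
  rw [Matrix.mul_apply]
  simp only [Matrix.transpose_apply, Matrix.of_apply]
  by_cases hjl : j = l
  · subst hjl
    rw [Matrix.diagonal_apply_eq]
    by_cases hq : (j : ℕ) < q
    · rw [if_pos hq, Finset.sum_eq_single (⟨(j : ℕ), hq⟩ : Fin q)]
      · simp [pow_two]
      · intro b _ hb
        have hb' : (b : ℕ) ≠ (j : ℕ) := by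
          intro h; exact hb (Fin.ext h)
        simp [hb']
      · intro h; exact absurd (Finset.mem_univ _) h
    · rw [if_neg hq, Finset.sum_eq_zero]
      intro i _
      have : (i : ℕ) ≠ (j : ℕ) := by have := i.isLt; omega
      simp [this]
  · rw [Matrix.diagonal_apply_ne _ hjl, Finset.sum_eq_zero]
    intro i _
    have hne : (j : ℕ) ≠ (l : ℕ) := fun h => hjl (Fin.ext h)
    by_cases h1 : (i : ℕ) = (j : ℕ)
    · have h2 : (i : ℕ) ≠ (l : ℕ) := by omega
      simp [h2]
    · simp [h1]

lemma sg_emb {q s shat : ℕ} (hshat : shat ≤ s) (σ : ℕ → ℝ) :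
    (Matrix.of fun (i : Fin q) (j : Fin s) => if (i : ℕ) = (j : ℕ) then σ i else 0)
      * (Matrix.of fun (j : Fin s) (k : Fin shat) => if (j : ℕ) = (k : ℕ) then (1:ℝ) else 0)
    = Matrix.of fun (i : Fin q) (k : Fin shat) => if (i : ℕ) = (k : ℕ) then σ i else 0 := by
  ext i k
  rw [Matrix.mul_apply]
  simp only [Matrix.of_apply]
  rw [Finset.sum_eq_single (Fin.castLE hshat k)]
  · simp [Fin.castLE]
  · intro b _ hb
    have hb' : (b : ℕ) ≠ (k : ℕ) := by
      intro h; exact hb (Fin.ext (by simp [h, Fin.castLE]))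
    simp [hb']
  · intro h; exact absurd (Finset.mem_univ _) h

lemma fip_sg {q shat : ℕ} (σ : ℕ → ℝ) :
    fip (Matrix.of fun (i : Fin q) (k : Fin shat) => if (i : ℕ) = (k : ℕ) then σ i else 0)
        (Matrix.of fun (i : Fin q) (k : Fin shat) => if (i : ℕ) = (k : ℕ) then σ i else 0)
    = ∑ k : Fin shat, (if (k : ℕ) < q then σ (k : ℕ) ^ 2 else 0) := by
  rw [fip_eq_sum]
  refine Finset.sum_congr rfl fun k _ => ?_
  simp only [Matrix.of_apply]
  by_cases hq : (k : ℕ) < q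
  · rw [if_pos hq, Finset.sum_eq_single (⟨(k : ℕ), hq⟩ : Fin q)]
    · simp [pow_two]
    · intro b _ hb
      have hb' : (b : ℕ) ≠ (k : ℕ) := by
        intro h; exact hb (Fin.ext h)
      simp [hb']
    · intro h; exact absurd (Finset.mem_univ _) h
  · rw [if_neg hq, Finset.sum_eq_zero]
    intro i _
    have : (i : ℕ) ≠ (k : ℕ) := by have := i.isLt; omega
    simp [this]

lemma diag_gram_nonneg {m n : Type*} [Fintype m] [Fintype n] (X : Matrix m n ℝ) (j : n) :
    0 ≤ (Xᵀ * X) j j := by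
  rw [Matrix.mul_apply]
  exact Finset.sum_nonneg fun a _ => by
    rw [Matrix.transpose_apply]; exact mul_self_nonneg _

lemma diag_symm_idem_nonneg {n : Type*} [Fintype n] (Q : Matrix n n ℝ)
    (hsym : Qᵀ = Q) (hidem : Q * Q = Q) (W : Matrix n n ℝ) (j : n) :
    0 ≤ (Wᵀ * Q * W) j j := by
  have h : Wᵀ * Q * W = (Q * W)ᵀ * (Q * W) := by
    rw [Matrix.transpose_mul, hsym]
    conv_lhs => rw [← hidem]
    simp only [Matrix.mul_assoc]
  rw [h]
  exact diag_gram_nonneg _ _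

lemma trace_diag {n : Type*} [Fintype n] [DecidableEq n] (d : n → ℝ) (N : Matrix n n ℝ) :
    Matrix.trace (Matrix.diagonal d * N) = ∑ j, d j * N j j := by
  simp [Matrix.trace, Matrix.diag, Matrix.diagonal_mul]

end SVD

end Stmt8Aux


/-- Optimal low-rank bases in time. Let `x ∈ S·Y` have coefficient matrix `X`,
let `M_Y = L_Y L_Yᵀ`, `M_S = L_S L_Sᵀ` with `L_Y, L_S` invertible, and let
`U_{ŝ}` consist of `ŝ` leading right singular vectors of `A := L_Yᵀ X L_S`
(encoded by a full SVD `A = U Σ Wᵀ` with decreasingly ordered nonnegative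
singular values `σ`, `U_{ŝ}` being the first `ŝ` columns of `W`). With
`ψ̂_k := ∑_j (L_S^{-ᵀ} U_{ŝ})_{jk} ψ_j` and `Ŝ = span{ψ̂_k}`, the space `Ŝ` is a
best-approximating `ŝ`-dimensional subspace of `S`: for every `ŝ`-dimensional
subspace `R ⊆ S` (spanned by `r_k = ∑_j B_{jk} ψ_j` with linearly independent
columns `B`), the `L²((0,T)×Ω)` error of the orthogonal projection of `x` onto
`Ŝ·Y` (characterized by orthogonality of the residual to `Ŝ·Y`) is at most the
error of the orthogonal projection of `x` onto `R·Y`. -/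
theorem stmt_8
    {q s shat : ℕ} {Ω T : Type*} [MeasurableSpace Ω] [MeasurableSpace T]
    (μ : Measure Ω) (τ : Measure T) [SigmaFinite μ] [SigmaFinite τ]
    (ν : Fin q → Lp ℝ 2 μ) (ψ : Fin s → Lp ℝ 2 τ)
    (hν : LinearIndependent ℝ ν) (hψ : LinearIndependent ℝ ψ)
    (LS : Matrix (Fin s) (Fin s) ℝ) (hLS : IsUnit LS.det)
    (hMS : ∀ i j, (inner ℝ (ψ i) (ψ j) : ℝ) = (LS * LSᵀ) i j)
    (LY : Matrix (Fin q) (Fin q) ℝ) (hLY : IsUnit LY.det)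
    (hMY : ∀ i j, (inner ℝ (ν i) (ν j) : ℝ) = (LY * LYᵀ) i j)
    (X : Matrix (Fin q) (Fin s) ℝ)
    -- an SVD of A = L_Yᵀ X L_S with decreasingly ordered singular values:
    (U : Matrix (Fin q) (Fin q) ℝ) (W : Matrix (Fin s) (Fin s) ℝ) (σ : ℕ → ℝ)
    (hU : Uᵀ * U = 1) (hUU : U * Uᵀ = 1) (hW : Wᵀ * W = 1) (hWW : W * Wᵀ = 1)
    (hσ0 : ∀ n, 0 ≤ σ n) (hσmono : ∀ m n, m ≤ n → σ n ≤ σ m)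
    (hSVD : LYᵀ * X * LS
        = U * (Matrix.of fun (i : Fin q) (j : Fin s) =>
            if (i : ℕ) = (j : ℕ) then σ i else 0) * Wᵀ)
    (hshat : shat ≤ s)
    -- U_{ŝ}: the ŝ leading right singular vectors:
    (Us : Matrix (Fin s) (Fin shat) ℝ)
    (hUs : ∀ j k, Us j k = W j (Fin.castLE hshat k))
    -- Π_{Ŝ·Y} x, with coefficients Ĉ w.r.t. the basis {ν_i ψ̂_k} of Ŝ·Y,
    -- characterized by residual orthogonality to Ŝ·Y:
    (Chat : Matrix (Fin q) (Fin shat) ℝ)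
    (hChat : ∀ D : Matrix (Fin q) (Fin shat) ℝ,
      ∫ p : Ω × T,
        ((∑ j, ∑ i, X i j * ν i p.1 * ψ j p.2)
          - ∑ k, ∑ i, Chat i k * ν i p.1 * (∑ j, ((LSᵀ)⁻¹ * Us) j k * ψ j p.2))
        * (∑ k, ∑ i, D i k * ν i p.1 * (∑ j, ((LSᵀ)⁻¹ * Us) j k * ψ j p.2))
        ∂(μ.prod τ) = 0)
    -- an arbitrary ŝ-dimensional subspace R ⊆ S, spanned by the columns of B:
    (B : Matrix (Fin s) (Fin shat) ℝ)
    (hB : LinearIndependent ℝ (fun k : Fin shat => fun j : Fin s => B j k))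
    -- Π_{R·Y} x, with coefficients C, characterized by residual orthogonality:
    (C : Matrix (Fin q) (Fin shat) ℝ)
    (hC : ∀ D : Matrix (Fin q) (Fin shat) ℝ,
      ∫ p : Ω × T,
        ((∑ j, ∑ i, X i j * ν i p.1 * ψ j p.2)
          - ∑ k, ∑ i, C i k * ν i p.1 * (∑ j, B j k * ψ j p.2))
        * (∑ k, ∑ i, D i k * ν i p.1 * (∑ j, B j k * ψ j p.2))
        ∂(μ.prod τ) = 0) :
    ∫ p : Ω × T,
        ((∑ j, ∑ i, X i j * ν i p.1 * ψ j p.2)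
          - ∑ k, ∑ i, Chat i k * ν i p.1 * (∑ j, ((LSᵀ)⁻¹ * Us) j k * ψ j p.2)) ^ 2
        ∂(μ.prod τ)
      ≤ ∫ p : Ω × T,
        ((∑ j, ∑ i, X i j * ν i p.1 * ψ j p.2)
          - ∑ k, ∑ i, C i k * ν i p.1 * (∑ j, B j k * ψ j p.2)) ^ 2
        ∂(μ.prod τ) := by
  classical
  have hLST : IsUnit (LSᵀ).det := by rwa [Matrix.det_transpose]
  have hLYT : IsUnit (LYᵀ).det := by rwa [Matrix.det_transpose]
  have hMSsym : ∀ a b, (LS * LSᵀ) a b = (LS * LSᵀ) b a := by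
    intro a b
    have h : (LS * LSᵀ)ᵀ = LS * LSᵀ := by
      rw [Matrix.transpose_mul, Matrix.transpose_transpose]
    conv_lhs => rw [← h]
    rw [Matrix.transpose_apply]
  have hMYent : ∀ i k : Fin q, (∫ w, ν i w * ν k w ∂μ) = (LY * LYᵀ) i k := by
    intro i k
    rw [← hMY i k, MeasureTheory.L2.inner_def]
    refine integral_congr_ae (Filter.Eventually.of_forall fun w => ?_)
    simp [RCLike.inner_apply, mul_comm]
  have hMSent : ∀ j l : Fin s, (∫ x, ψ j x * ψ l x ∂τ) = (LS * LSᵀ) j l := by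
    intro j l
    rw [← hMS j l, MeasureTheory.L2.inner_def]
    refine integral_congr_ae (Filter.Eventually.of_forall fun x => ?_)
    simp [RCLike.inner_apply, mul_comm]
  have master : ∀ E F : Matrix (Fin q) (Fin s) ℝ,
      (∫ p : Ω × T,
        (∑ j, ∑ i, E i j * ν i p.1 * ψ j p.2) * (∑ j, ∑ i, F i j * ν i p.1 * ψ j p.2)
        ∂(μ.prod τ))
      = Stmt8Aux.fip (LYᵀ * E * LS) (LYᵀ * F * LS) := by
    intro E F
    rw [Stmt8Aux.integral_key μ τ ν ψ E F]
    simp only [hMYent, hMSent]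
    rw [Stmt8Aux.fip_expand E F _ _ hMSsym]
    rw [show (LY * LYᵀ) * F * (LS * LSᵀ) = LYᵀᵀ * ((LYᵀ * F * LS) * LSᵀ) by
      simp only [Matrix.transpose_transpose, Matrix.mul_assoc]]
    rw [← Stmt8Aux.fip_mul_left LYᵀ E ((LYᵀ * F * LS) * LSᵀ)]
    rw [← Stmt8Aux.fip_mul_right (LYᵀ * E) LS (LYᵀ * F * LS)]
  have e2 : ∀ (Dm : Matrix (Fin q) (Fin shat) ℝ) (p : Ω × T),
      (∑ k, ∑ i, Dm i k * ν i p.1 * (∑ j, ((LSᵀ)⁻¹ * Us) j k * ψ j p.2))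
        = ∑ j, ∑ i, (Dm * ((LSᵀ)⁻¹ * Us)ᵀ) i j * ν i p.1 * ψ j p.2 :=
    fun Dm p => Stmt8Aux.sum_expand Dm ((LSᵀ)⁻¹ * Us) (fun i => ν i p.1) (fun j => ψ j p.2)
  have e2B : ∀ (Dm : Matrix (Fin q) (Fin shat) ℝ) (p : Ω × T),
      (∑ k, ∑ i, Dm i k * ν i p.1 * (∑ j, B j k * ψ j p.2))
        = ∑ j, ∑ i, (Dm * Bᵀ) i j * ν i p.1 * ψ j p.2 :=
    fun Dm p => Stmt8Aux.sum_expand Dm B (fun i => ν i p.1) (fun j => ψ j p.2)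
  have esub : ∀ (P : Matrix (Fin q) (Fin s) ℝ) (p : Ω × T),
      (∑ j, ∑ i, X i j * ν i p.1 * ψ j p.2) - (∑ j, ∑ i, P i j * ν i p.1 * ψ j p.2)
        = ∑ j, ∑ i, (X - P) i j * ν i p.1 * ψ j p.2 := by
    intro P p
    rw [← Finset.sum_sub_distrib]
    refine Finset.sum_congr rfl fun j _ => ?_
    rw [← Finset.sum_sub_distrib]
    refine Finset.sum_congr rfl fun i _ => ?_
    rw [Matrix.sub_apply]; ring
  have hChatF : ∀ D : Matrix (Fin q) (Fin shat) ℝ,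
      Stmt8Aux.fip (LYᵀ * (X - Chat * ((LSᵀ)⁻¹ * Us)ᵀ) * LS)
        (LYᵀ * (D * ((LSᵀ)⁻¹ * Us)ᵀ) * LS) = 0 := by
    intro D
    have h0 := hChat D
    simp only [e2, esub] at h0
    rw [master (X - Chat * ((LSᵀ)⁻¹ * Us)ᵀ) (D * ((LSᵀ)⁻¹ * Us)ᵀ)] at h0
    exact h0
  have hCF : ∀ D : Matrix (Fin q) (Fin shat) ℝ,
      Stmt8Aux.fip (LYᵀ * (X - C * Bᵀ) * LS) (LYᵀ * (D * Bᵀ) * LS) = 0 := by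
    intro D
    have h0 := hC D
    simp only [e2B, esub] at h0
    rw [master (X - C * Bᵀ) (D * Bᵀ)] at h0
    exact h0
  -- rewrite the goal into Frobenius form
  simp only [pow_two, e2, e2B, esub]
  rw [master (X - Chat * ((LSᵀ)⁻¹ * Us)ᵀ) (X - Chat * ((LSᵀ)⁻¹ * Us)ᵀ)]
  rw [master (X - C * Bᵀ) (X - C * Bᵀ)]
  -- linear-algebra reductions
  have hGT : ((LSᵀ)⁻¹ * Us)ᵀ * LS = Usᵀ := by
    rw [Matrix.transpose_mul, Matrix.transpose_nonsing_inv, Matrix.transpose_transpose,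
      Matrix.mul_assoc, Matrix.nonsing_inv_mul _ hLS, Matrix.mul_one]
  have hx : ∀ Dm : Matrix (Fin q) (Fin shat) ℝ,
      LYᵀ * (Dm * ((LSᵀ)⁻¹ * Us)ᵀ) * LS = (LYᵀ * Dm) * Usᵀ := by
    intro Dm
    rw [← hGT]
    simp only [Matrix.mul_assoc]
  have hxB : ∀ Dm : Matrix (Fin q) (Fin shat) ℝ,
      LYᵀ * (Dm * Bᵀ) * LS = (LYᵀ * Dm) * (LSᵀ * B)ᵀ := by
    intro Dm
    rw [Matrix.transpose_mul, Matrix.transpose_transpose]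
    simp only [Matrix.mul_assoc]
  have hsub : ∀ (P : Matrix (Fin q) (Fin s) ℝ),
      LYᵀ * (X - P) * LS = LYᵀ * X * LS - LYᵀ * P * LS := by
    intro P
    rw [Matrix.mul_sub, Matrix.sub_mul]
  -- orthogonality in the reduced variables
  have hChatF' : ∀ D' : Matrix (Fin q) (Fin shat) ℝ,
      Stmt8Aux.fip (LYᵀ * X * LS - (LYᵀ * Chat) * Usᵀ) (D' * Usᵀ) = 0 := by
    intro D'
    have h0 := hChatF ((LYᵀ)⁻¹ * D')
    rw [hsub, hx Chat, hx ((LYᵀ)⁻¹ * D'),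
      ← Matrix.mul_assoc LYᵀ (LYᵀ)⁻¹ D', Matrix.mul_nonsing_inv _ hLYT, Matrix.one_mul] at h0
    exact h0
  have hCF' : ∀ D' : Matrix (Fin q) (Fin shat) ℝ,
      Stmt8Aux.fip (LYᵀ * X * LS - (LYᵀ * C) * (LSᵀ * B)ᵀ) (D' * (LSᵀ * B)ᵀ) = 0 := by
    intro D'
    have h0 := hCF ((LYᵀ)⁻¹ * D')
    rw [hsub, hxB C, hxB ((LYᵀ)⁻¹ * D'),
      ← Matrix.mul_assoc LYᵀ (LYᵀ)⁻¹ D', Matrix.mul_nonsing_inv _ hLYT, Matrix.one_mul] at h0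
    exact h0
  -- Gram matrices are invertible
  have hUsGram : Usᵀ * Us = (1 : Matrix (Fin shat) (Fin shat) ℝ) := by
    ext k l
    rw [Matrix.mul_apply]
    have step : ∑ a, Usᵀ k a * Us a l
        = (Wᵀ * W) (Fin.castLE hshat k) (Fin.castLE hshat l) := by
      rw [Matrix.mul_apply]
      refine Finset.sum_congr rfl fun a _ => ?_
      rw [Matrix.transpose_apply, Matrix.transpose_apply, hUs, hUs]
    rw [step, hW]
    by_cases hkl : k = l
    · subst hkl; rw [Matrix.one_apply_eq, Matrix.one_apply_eq]
    · rw [Matrix.one_apply_ne (fun h => hkl (by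
        have := congrArg (Fin.val) h
        simp only [Fin.coe_castLE] at this
        exact Fin.ext this)), Matrix.one_apply_ne hkl]
  have hUsDet : IsUnit (Usᵀ * Us).det := by rw [hUsGram]; simp
  have hBv : ∀ v : Fin shat → ℝ, B *ᵥ v = 0 → v = 0 := by
    intro v hv
    have h1 : ∑ k, v k • (fun j : Fin s => B j k) = 0 := by
      funext j
      have hj := congrFun hv j
      simp only [Matrix.mulVec, dotProduct, Pi.zero_apply] at hj
      rw [Finset.sum_apply]
      simp only [Pi.smul_apply, smul_eq_mul, Pi.zero_apply]
      rw [← hj]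
      exact Finset.sum_congr rfl fun k _ => mul_comm _ _
    have h2 := Fintype.linearIndependent_iff.mp hB v h1
    funext k; exact h2 k
  have hMBv : ∀ v : Fin shat → ℝ, (LSᵀ * B) *ᵥ v = 0 → v = 0 := by
    intro v hv
    apply hBv
    have h2 : (LSᵀ)⁻¹ *ᵥ ((LSᵀ * B) *ᵥ v) = 0 := by rw [hv, Matrix.mulVec_zero]
    rwa [Matrix.mulVec_mulVec, ← Matrix.mul_assoc, Matrix.nonsing_inv_mul _ hLST,
      Matrix.one_mul] at h2
  have hBDet : IsUnit ((LSᵀ * B)ᵀ * (LSᵀ * B)).det := Stmt8Aux.gram_unit _ hMBv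
  -- projections
  have hL := Stmt8Aux.proj_norm hUsDet hChatF'
  have hR := Stmt8Aux.proj_norm hBDet hCF'
  rw [hsub (Chat * ((LSᵀ)⁻¹ * Us)ᵀ), hx Chat, hsub (C * Bᵀ), hxB C]
  rw [hL, hR]
  -- it remains to compare the two projected energies
  rw [hUsGram, inv_one, Matrix.mul_one]
  -- value of the Us-energy
  have hWtUs : Wᵀ * Us
      = Matrix.of (fun (j : Fin s) (k : Fin shat) => if (j : ℕ) = (k : ℕ) then (1:ℝ) else 0) := by
    ext j k
    rw [Matrix.mul_apply]
    have step : ∑ a, Wᵀ j a * Us a k = (Wᵀ * W) j (Fin.castLE hshat k) := by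
      rw [Matrix.mul_apply]
      refine Finset.sum_congr rfl fun a _ => ?_
      rw [Matrix.transpose_apply, hUs]
    rw [step, hW]
    simp only [Matrix.one_apply, Matrix.of_apply]
    by_cases hjk : j = Fin.castLE hshat k
    · rw [if_pos hjk, if_pos (by rw [hjk]; simp)]
    · rw [if_neg hjk, if_neg (fun h => hjk (Fin.ext (by simpa using h)))]
  have hAUs : (LYᵀ * X * LS) * Us
      = U * (Matrix.of fun (i : Fin q) (k : Fin shat) => if (i : ℕ) = (k : ℕ) then σ i else 0) := by
    rw [hSVD]
    simp only [Matrix.mul_assoc]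
    rw [hWtUs, Stmt8Aux.sg_emb hshat σ]
  have hfipUs : Stmt8Aux.fip (LYᵀ * X * LS) ((LYᵀ * X * LS) * (Us * Usᵀ))
      = ∑ k : Fin shat, (if (k : ℕ) < q then σ (k : ℕ) ^ 2 else 0) := by
    rw [show (LYᵀ * X * LS) * (Us * Usᵀ) = ((LYᵀ * X * LS) * Us) * Usᵀ by
      simp only [Matrix.mul_assoc]]
    rw [← Stmt8Aux.fip_mul_right (LYᵀ * X * LS) Us ((LYᵀ * X * LS) * Us)]
    rw [hAUs, Stmt8Aux.fip_mul_left U _ _, ← Matrix.mul_assoc, hU, Matrix.one_mul]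
    exact Stmt8Aux.fip_sg σ
  -- value and bound for the B-energy
  have hQsym := Stmt8Aux.Q_symm (M := LSᵀ * B)
  have hQidem := Stmt8Aux.Q_idem hBDet
  have hAtA : (LYᵀ * X * LS)ᵀ * (LYᵀ * X * LS)
      = W * Matrix.diagonal (fun j : Fin s => if (j : ℕ) < q then σ (j : ℕ) ^ 2 else 0) * Wᵀ := by
    rw [hSVD]
    simp only [Matrix.transpose_mul, Matrix.transpose_transpose]
    simp only [Matrix.mul_assoc]
    rw [← Matrix.mul_assoc Uᵀ U _, hU, Matrix.one_mul]
    rw [← Matrix.mul_assoc _ _ Wᵀ, Stmt8Aux.sigma_gram σ]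
  set QB : Matrix (Fin s) (Fin s) ℝ :=
    (LSᵀ * B) * ((LSᵀ * B)ᵀ * (LSᵀ * B))⁻¹ * (LSᵀ * B)ᵀ with hQB
  have hfipB : Stmt8Aux.fip (LYᵀ * X * LS) ((LYᵀ * X * LS) * QB)
      = ∑ j : Fin s, (if (j : ℕ) < q then σ (j : ℕ) ^ 2 else 0) * ((Wᵀ * QB * W) j j) := by
    rw [Stmt8Aux.fip_def, ← Matrix.mul_assoc, hAtA]
    rw [show W * Matrix.diagonal (fun j : Fin s => if (j : ℕ) < q then σ (j : ℕ) ^ 2 else 0) * Wᵀ * QB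
        = W * (Matrix.diagonal (fun j : Fin s => if (j : ℕ) < q then σ (j : ℕ) ^ 2 else 0) * (Wᵀ * QB)) by
      simp only [Matrix.mul_assoc]]
    rw [Matrix.trace_mul_comm]
    rw [show Matrix.diagonal (fun j : Fin s => if (j : ℕ) < q then σ (j : ℕ) ^ 2 else 0) * (Wᵀ * QB) * W
        = Matrix.diagonal (fun j : Fin s => if (j : ℕ) < q then σ (j : ℕ) ^ 2 else 0) * (Wᵀ * QB * W) by
      simp only [Matrix.mul_assoc]]
    exact Stmt8Aux.trace_diag _ _
  have htt0 : ∀ j, 0 ≤ (Wᵀ * QB * W) j j :=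
    Stmt8Aux.diag_symm_idem_nonneg QB hQsym hQidem W
  have htt1 : ∀ j, (Wᵀ * QB * W) j j ≤ 1 := by
    intro j
    have h1 : (Wᵀ * (1 - QB) * W) j j = 1 - (Wᵀ * QB * W) j j := by
      have he : Wᵀ * (1 - QB) * W = Wᵀ * W - Wᵀ * QB * W := by
        rw [Matrix.mul_sub, Matrix.mul_one, Matrix.sub_mul]
      rw [he, Matrix.sub_apply, hW, Matrix.one_apply_eq]
    have h2 : 0 ≤ (Wᵀ * (1 - QB) * W) j j := by
      refine Stmt8Aux.diag_symm_idem_nonneg _ ?_ ?_ W j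
      · rw [Matrix.transpose_sub, Matrix.transpose_one, hQsym]
      · rw [Matrix.sub_mul, Matrix.one_mul, Matrix.mul_sub, Matrix.mul_one, hQidem]
        abel
    linarith
  have httsum : ∑ j, (Wᵀ * QB * W) j j = (shat : ℝ) := by
    have h1 : ∑ j, (Wᵀ * QB * W) j j = Matrix.trace (Wᵀ * QB * W) := by
      simp [Matrix.trace, Matrix.diag]
    rw [h1]
    calc Matrix.trace (Wᵀ * QB * W) = Matrix.trace (Wᵀ * (QB * W)) := by
          rw [Matrix.mul_assoc]
      _ = Matrix.trace ((QB * W) * Wᵀ) := Matrix.trace_mul_comm _ _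
      _ = Matrix.trace (QB * (W * Wᵀ)) := by rw [Matrix.mul_assoc]
      _ = Matrix.trace QB := by rw [hWW, Matrix.mul_one]
      _ = Matrix.trace (((LSᵀ * B)ᵀ * (LSᵀ * B))⁻¹ * ((LSᵀ * B)ᵀ * (LSᵀ * B))) := by
          rw [hQB, Matrix.mul_assoc, Matrix.trace_mul_comm, Matrix.mul_assoc]
      _ = Matrix.trace (1 : Matrix (Fin shat) (Fin shat) ℝ) := by
          rw [Matrix.nonsing_inv_mul _ hBDet]
      _ = (shat : ℝ) := by simp [Matrix.trace_one]
  have hd0 : ∀ j : Fin s, 0 ≤ (if (j : ℕ) < q then σ (j : ℕ) ^ 2 else 0) := by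
    intro j; split
    · positivity
    · exact le_refl 0
  have hdmono : ∀ i j : Fin s, i ≤ j →
      (if (j : ℕ) < q then σ (j : ℕ) ^ 2 else 0) ≤ (if (i : ℕ) < q then σ (i : ℕ) ^ 2 else 0) := by
    intro i j hij
    have hij' : (i : ℕ) ≤ (j : ℕ) := hij
    by_cases hj : (j : ℕ) < q
    · have hi : (i : ℕ) < q := lt_of_le_of_lt hij' hj
      rw [if_pos hj, if_pos hi]
      exact pow_le_pow_left₀ (hσ0 _) (hσmono _ _ hij') 2
    · rw [if_neg hj]
      exact hd0 i
  have hfinal := Stmt8Aux.sum_dt_le hshat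
    (fun j : Fin s => if (j : ℕ) < q then σ (j : ℕ) ^ 2 else 0)
    (fun j : Fin s => (Wᵀ * QB * W) j j) hd0 hdmono htt0 htt1 httsum
  have hcast : ∑ k : Fin shat,
      (if ((Fin.castLE hshat k : Fin s) : ℕ) < q then σ ((Fin.castLE hshat k : Fin s) : ℕ) ^ 2 else 0)
      = ∑ k : Fin shat, (if (k : ℕ) < q then σ (k : ℕ) ^ 2 else 0) := by
    refine Finset.sum_congr rfl fun k _ => ?_
    simp [Fin.coe_castLE]
  have hfinal' : ∑ j : Fin s, (if (j : ℕ) < q then σ (j : ℕ) ^ 2 else 0) * ((Wᵀ * QB * W) j j)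
      ≤ ∑ k : Fin shat, (if (k : ℕ) < q then σ (k : ℕ) ^ 2 else 0) := by
    have := hfinal
    simp only [Fin.coe_castLE] at this
    convert this using 2
  rw [hfipUs, hfipB]
  linarith
end
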